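/- arXiv:1706.00817 — 5 statements merged into one kernel-verified Lean document; each statement's English description precedes it below -/
import Mathlib

section
/- There are exactly 240 generic monodromy representations of B in S₃, i.e. the set of group homomorphisms φ: B → S₃ such that φ(σ) is a transposition and the image of φ is a transitive subgroup of S₃ has cardinality 240. -/
/-- Generators of the braid group `B₂(C₂)` in Bellingeri's presentation. -/
inductive Gen : Type
  | a1 | a2 | b1 | b2 | s
  deriving DecidableEq

namespace Braid

open FreeGroup

abbrev A1 : FreeGroup Gen := FreeGroup.of Gen.a1
abbrev A2 : FreeGroup Gen := FreeGroup.of Gen.a2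
abbrev B1 : FreeGroup Gen := FreeGroup.of Gen.b1
abbrev B2 : FreeGroup Gen := FreeGroup.of Gen.b2
abbrev Sg : FreeGroup Gen := FreeGroup.of Gen.s

/-- The eleven relations (R2), (R3), (R4), (TR) of Bellingeri's presentation,
written as words that are set equal to `1`. -/
def rels : Set (FreeGroup Gen) :=
  { Sg⁻¹ * A1 * Sg⁻¹ * A1 * (A1 * Sg⁻¹ * A1 * Sg⁻¹)⁻¹,
    Sg⁻¹ * A2 * Sg⁻¹ * A2 * (A2 * Sg⁻¹ * A2 * Sg⁻¹)⁻¹,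
    Sg⁻¹ * B1 * Sg⁻¹ * B1 * (B1 * Sg⁻¹ * B1 * Sg⁻¹)⁻¹,
    Sg⁻¹ * B2 * Sg⁻¹ * B2 * (B2 * Sg⁻¹ * B2 * Sg⁻¹)⁻¹,
    Sg⁻¹ * A1 * Sg * A2 * (A2 * Sg⁻¹ * A1 * Sg)⁻¹,
    Sg⁻¹ * B1 * Sg * B2 * (B2 * Sg⁻¹ * B1 * Sg)⁻¹,
    Sg⁻¹ * A1 * Sg * B2 * (B2 * Sg⁻¹ * A1 * Sg)⁻¹,
    Sg⁻¹ * B1 * Sg * A2 * (A2 * Sg⁻¹ * B1 * Sg)⁻¹,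
    Sg⁻¹ * A1 * Sg⁻¹ * B1 * (B1 * Sg⁻¹ * A1 * Sg)⁻¹,
    Sg⁻¹ * A2 * Sg⁻¹ * B2 * (B2 * Sg⁻¹ * A2 * Sg)⁻¹,
    (A1 * B1⁻¹ * A1⁻¹ * B1) * (A2 * B2⁻¹ * A2⁻¹ * B2) * (Sg * Sg)⁻¹ }

/-- The group `B`, isomorphic to the braid group `B₂(C₂)` on two strings
on a genus `2` surface. -/
abbrev B : Type := PresentedGroup rels

/-- The image of the generator `σ` in `B`. -/
def σB : B := PresentedGroup.of Gen.s

/-- A generic monodromy representation of `B` in `Sₙ`: a homomorphism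
`φ : B → Sₙ` such that `φ(σ)` is a transposition and the image of `φ` is a
transitive subgroup of `Sₙ`. -/
def IsGeneric (n : ℕ) (φ : B →* Equiv.Perm (Fin n)) : Prop :=
  (φ σB).IsSwap ∧ ∀ i j : Fin n, ∃ g : B, φ g i = j

end Braid

open Braid

/-! ### Auxiliary material for the proof -/

abbrev P3 := Equiv.Perm (Fin 3)

instance (τ : P3) : Decidable τ.IsSwap :=
  decidable_of_iff (∃ x y, x ≠ y ∧ τ = Equiv.swap x y) Iff.rfl

lemma aux_trans : ∀ (τ ρ : P3), τ.IsSwap → ρ ≠ 1 → ρ ≠ τ →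
    ∀ i j : Fin 3, ∃ p q : P3,
      (p = 1 ∨ p = τ ∨ p = ρ ∨ p = ρ⁻¹) ∧ (q = 1 ∨ q = τ ∨ q = ρ ∨ q = ρ⁻¹) ∧ q (p i) = j := by
  decide

lemma aux_fix : ∀ x y : Fin 3, x ≠ y → ∃ z : Fin 3, z ≠ x ∧ z ≠ y := by decide

/-- The eleven relations, as equations on the images of the generators. -/
def DF (f : Gen → P3) : Prop :=
  letI a1 := f .a1; letI a2 := f .a2; letI b1 := f .b1; letI b2 := f .b2; letI s := f .s
  (s⁻¹ * a1 * s⁻¹ * a1 = a1 * s⁻¹ * a1 * s⁻¹) ∧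
  (s⁻¹ * a2 * s⁻¹ * a2 = a2 * s⁻¹ * a2 * s⁻¹) ∧
  (s⁻¹ * b1 * s⁻¹ * b1 = b1 * s⁻¹ * b1 * s⁻¹) ∧
  (s⁻¹ * b2 * s⁻¹ * b2 = b2 * s⁻¹ * b2 * s⁻¹) ∧
  (s⁻¹ * a1 * s * a2 = a2 * s⁻¹ * a1 * s) ∧
  (s⁻¹ * b1 * s * b2 = b2 * s⁻¹ * b1 * s) ∧
  (s⁻¹ * a1 * s * b2 = b2 * s⁻¹ * a1 * s) ∧
  (s⁻¹ * b1 * s * a2 = a2 * s⁻¹ * b1 * s) ∧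
  (s⁻¹ * a1 * s⁻¹ * b1 = b1 * s⁻¹ * a1 * s) ∧
  (s⁻¹ * a2 * s⁻¹ * b2 = b2 * s⁻¹ * a2 * s) ∧
  (a1 * b1⁻¹ * a1⁻¹ * b1 * (a2 * b2⁻¹ * a2⁻¹ * b2) = s * s)

def FullF (f : Gen → P3) : Prop :=
  DF f ∧ (f .s).IsSwap ∧
    ((f .a1 ≠ 1 ∧ f .a1 ≠ f .s) ∨ (f .a2 ≠ 1 ∧ f .a2 ≠ f .s) ∨
     (f .b1 ≠ 1 ∧ f .b1 ≠ f .s) ∨ (f .b2 ≠ 1 ∧ f .b2 ≠ f .s))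

lemma DF_iff (f : Gen → P3) : (∀ r ∈ rels, FreeGroup.lift f r = 1) ↔ DF f := by
  simp only [rels, Set.mem_insert_iff, Set.mem_singleton_iff, forall_eq_or_imp, forall_eq,
    map_mul, map_inv, FreeGroup.lift_apply_of, mul_inv_eq_one, DF]

lemma hom_eqs (φ : B →* P3) : ∀ r ∈ rels, FreeGroup.lift (fun k => φ (PresentedGroup.of k)) r = 1 := by
  intro r hr
  have h : FreeGroup.lift (fun k => φ (PresentedGroup.of k)) = φ.comp (PresentedGroup.mk rels) := by
    apply FreeGroup.ext_hom
    intro a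
    rfl
  rw [h]
  have : PresentedGroup.mk rels r = 1 := by
    refine (QuotientGroup.eq_one_iff r).mpr (Subgroup.subset_normalClosure hr)
  simp [MonoidHom.comp_apply, this]

lemma pickg (φ : B →* P3) (k₀ : Gen) {τ ρ p : P3} (hτ : φ (PresentedGroup.of Gen.s) = τ)
    (hρ : φ (PresentedGroup.of k₀) = ρ)
    (hp : p = 1 ∨ p = τ ∨ p = ρ ∨ p = ρ⁻¹) : ∃ g : B, φ g = p := by
  rcases hp with rfl | rfl | rfl | rfl
  · exact ⟨1, map_one φ⟩
  · exact ⟨PresentedGroup.of Gen.s, hτ⟩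
  · exact ⟨PresentedGroup.of k₀, hρ⟩
  · exact ⟨(PresentedGroup.of k₀)⁻¹, by rw [map_inv, hρ]⟩

lemma trans_of_full (φ : B →* P3) (k₀ : Gen)
    (hsw : (φ (PresentedGroup.of Gen.s)).IsSwap)
    (h1 : φ (PresentedGroup.of k₀) ≠ 1)
    (h2 : φ (PresentedGroup.of k₀) ≠ φ (PresentedGroup.of Gen.s)) :
    ∀ i j : Fin 3, ∃ g : B, φ g i = j := by
  intro i j
  obtain ⟨p, q, hp, hq, hpq⟩ := aux_trans _ _ hsw h1 h2 i j
  obtain ⟨gp, hgp⟩ := pickg φ k₀ rfl rfl hp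
  obtain ⟨gq, hgq⟩ := pickg φ k₀ rfl rfl hq
  exact ⟨gq * gp, by rw [map_mul, hgq, hgp]; exact hpq⟩

lemma isGeneric_iff_fullF (φ : B →* P3) :
    IsGeneric 3 φ ↔ FullF (fun k => φ (PresentedGroup.of k)) := by
  constructor
  · rintro ⟨hsw, htr⟩
    have hDF : DF (fun k => φ (PresentedGroup.of k)) := (DF_iff _).mp (hom_eqs φ)
    refine ⟨hDF, hsw, ?_⟩
    by_contra hcon
    push_neg at hcon
    obtain ⟨hA1, hA2, hB1, hB2⟩ := hcon
    obtain ⟨x, y, hxy, hxyswap⟩ := hsw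
    obtain ⟨z, hzx, hzy⟩ := aux_fix x y hxy
    have hsz : φ σB z = z := by
      rw [hxyswap]; exact Equiv.swap_apply_of_ne_of_ne hzx hzy
    have hfix : ∀ k : Gen, φ (PresentedGroup.of k) z = z := by
      intro k
      have fix1 : ∀ p : P3, (p ≠ 1 → p = φ σB) → p z = z := by
        intro p hp
        rcases eq_or_ne p 1 with rfl | h
        · rfl
        · rw [hp h]; exact hsz
      cases k
      · exact fix1 _ hA1
      · exact fix1 _ hA2
      · exact fix1 _ hB1
      · exact fix1 _ hB2
      · exact hsz
    have hall : ∀ g : B, φ g z = z := by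
      intro g
      have := PresentedGroup.generated_by rels
        ((MulAction.stabilizer P3 z).comap φ) (fun k => by
          simp only [Subgroup.mem_comap, MulAction.mem_stabilizer_iff]
          exact hfix k) g
      simpa only [Subgroup.mem_comap, MulAction.mem_stabilizer_iff, Equiv.Perm.smul_def] using this
    obtain ⟨g, hg⟩ := htr z x
    exact hzx ((hall g ▸ hg).symm ▸ rfl)
  · rintro ⟨hDF, hsw, hdisj⟩
    refine ⟨hsw, ?_⟩
    rcases hdisj with ⟨h1, h2⟩ | ⟨h1, h2⟩ | ⟨h1, h2⟩ | ⟨h1, h2⟩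
    · exact trans_of_full φ .a1 hsw h1 h2
    · exact trans_of_full φ .a2 hsw h1 h2
    · exact trans_of_full φ .b1 hsw h1 h2
    · exact trans_of_full φ .b2 hsw h1 h2

/-! ### A fast model of `S₃` for counting -/

def G6 := Fin 6
instance : DecidableEq G6 := fun a b => instDecidableEqFin 6 a b
instance : Fintype G6 := Fin.fintype 6
instance : Mul G6 :=
  ⟨fun x y => (⟨(6984862810408303548904398390 / 6 ^ (6 * x.val + y.val)) % 6,
    Nat.mod_lt _ (by omega)⟩ : Fin 6)⟩
instance : Inv G6 := ⟨fun x => (⟨(38310 / 6 ^ x.val) % 6, Nat.mod_lt _ (by omega)⟩ : Fin 6)⟩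
instance : One G6 := ⟨(⟨0, by omega⟩ : Fin 6)⟩

def sw (x : G6) : Prop := x.val = 1 ∨ x.val = 2 ∨ x.val = 3
instance : DecidablePred sw := fun x => by unfold sw; infer_instance

def Full6 (q : G6 × G6 × G6 × G6 × G6) : Prop :=
  letI a1 := q.1; letI a2 := q.2.1; letI b1 := q.2.2.1; letI b2 := q.2.2.2.1; letI s := q.2.2.2.2
  sw s ∧
  ((s⁻¹ * a1 * s⁻¹ * a1 = a1 * s⁻¹ * a1 * s⁻¹) ∧
  (s⁻¹ * a2 * s⁻¹ * a2 = a2 * s⁻¹ * a2 * s⁻¹) ∧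
  (s⁻¹ * b1 * s⁻¹ * b1 = b1 * s⁻¹ * b1 * s⁻¹) ∧
  (s⁻¹ * b2 * s⁻¹ * b2 = b2 * s⁻¹ * b2 * s⁻¹) ∧
  (s⁻¹ * a1 * s * a2 = a2 * s⁻¹ * a1 * s) ∧
  (s⁻¹ * b1 * s * b2 = b2 * s⁻¹ * b1 * s) ∧
  (s⁻¹ * a1 * s * b2 = b2 * s⁻¹ * a1 * s) ∧
  (s⁻¹ * b1 * s * a2 = a2 * s⁻¹ * b1 * s) ∧
  (s⁻¹ * a1 * s⁻¹ * b1 = b1 * s⁻¹ * a1 * s) ∧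
  (s⁻¹ * a2 * s⁻¹ * b2 = b2 * s⁻¹ * a2 * s) ∧
  (a1 * b1⁻¹ * a1⁻¹ * b1 * (a2 * b2⁻¹ * a2⁻¹ * b2) = s * s)) ∧
  ((a1 ≠ 1 ∧ a1 ≠ s) ∨ (a2 ≠ 1 ∧ a2 ≠ s) ∨ (b1 ≠ 1 ∧ b1 ≠ s) ∨ (b2 ≠ 1 ∧ b2 ≠ s))

instance : DecidablePred Full6 := fun q => by unfold Full6; infer_instance

set_option maxRecDepth 100000 in
set_option maxHeartbeats 4000000 in
lemma count6 : Fintype.card {q : G6 × G6 × G6 × G6 × G6 // Full6 q} = 240 := by decide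

/-- The encoding of `G6` into `S₃`. -/
def enc : G6 → P3 :=
  ![1, Equiv.swap 0 1, Equiv.swap 0 2, Equiv.swap 1 2,
    Equiv.swap 0 1 * Equiv.swap 1 2, (Equiv.swap 0 1 * Equiv.swap 1 2)⁻¹]

lemma enc_inj : Function.Injective enc := by decide
lemma enc_surj : Function.Surjective enc := by decide
lemma enc_mul : ∀ x y : G6, enc (x * y) = enc x * enc y := by decide
lemma enc_inv : ∀ x : G6, enc x⁻¹ = (enc x)⁻¹ := by decide
lemma enc_one : enc 1 = 1 := by decide
lemma enc_sw : ∀ x : G6, (enc x).IsSwap ↔ sw x := by decide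

noncomputable def e6 : G6 ≃ P3 := Equiv.ofBijective enc ⟨enc_inj, enc_surj⟩

def eP : P3 × P3 × P3 × P3 × P3 ≃ (Gen → P3) where
  toFun q := fun k => match k with
    | .a1 => q.1 | .a2 => q.2.1 | .b1 => q.2.2.1 | .b2 => q.2.2.2.1 | .s => q.2.2.2.2
  invFun f := (f .a1, f .a2, f .b1, f .b2, f .s)
  left_inv := by rintro ⟨a, b, c, d, e⟩; rfl
  right_inv := by intro f; funext k; cases k <;> rfl

noncomputable def E6 : G6 × G6 × G6 × G6 × G6 ≃ (Gen → P3) :=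
  ((e6.prodCongr (e6.prodCongr (e6.prodCongr (e6.prodCongr e6)))).trans eP)

lemma full_iff : ∀ q : G6 × G6 × G6 × G6 × G6, FullF (E6 q) ↔ Full6 q := by
  rintro ⟨x1, x2, x3, x4, x5⟩
  have hE : ∀ k : Gen, E6 (x1, x2, x3, x4, x5) k =
      enc ((fun k => match k with
        | Gen.a1 => x1 | Gen.a2 => x2 | Gen.b1 => x3 | Gen.b2 => x4 | Gen.s => x5) k) := by
    intro k; cases k <;> rfl
  simp only [FullF, DF, Full6, hE, ← enc_mul, ← enc_inv, ← enc_one, enc_inj.eq_iff,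
    ne_eq, enc_sw]
  tauto

noncomputable def mainEquiv : {φ : B →* Equiv.Perm (Fin 3) // IsGeneric 3 φ} ≃
    {f : Gen → P3 // FullF f} where
  toFun φ := ⟨fun k => φ.1 (PresentedGroup.of k), (isGeneric_iff_fullF φ.1).mp φ.2⟩
  invFun f := ⟨PresentedGroup.toGroup ((DF_iff f.1).mpr f.2.1), by
    have h : (fun k => PresentedGroup.toGroup ((DF_iff f.1).mpr f.2.1) (PresentedGroup.of k))
        = f.1 := funext fun k => PresentedGroup.toGroup.of _
    rw [isGeneric_iff_fullF, h]
    exact f.2⟩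
  left_inv := by
    rintro ⟨φ, hφ⟩
    refine Subtype.ext (PresentedGroup.ext fun x => ?_)
    simp [PresentedGroup.toGroup.of]
  right_inv := by
    rintro ⟨f, hf⟩
    refine Subtype.ext (funext fun k => ?_)
    simp [PresentedGroup.toGroup.of]

/-- There are exactly 240 generic monodromy representations of B in S₃. -/
theorem stmt1 :
    Set.ncard {φ : B →* Equiv.Perm (Fin 3) | IsGeneric 3 φ} = 240 := by
  rw [← Nat.card_coe_set_eq]
  have e : ↥{φ : B →* Equiv.Perm (Fin 3) | IsGeneric 3 φ} ≃
      {q : G6 × G6 × G6 × G6 × G6 // Full6 q} :=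
    mainEquiv.trans (Equiv.subtypeEquiv E6 (fun q => (full_iff q).symm)).symm
  rw [Nat.card_congr e, Nat.card_eq_fintype_card, count6]
end

section
/- Every orbit of the conjugation action of S₄ on the set of generic monodromy representations of B in S₄ consists of exactly 12 elements. -/
open Braid

namespace BraidAux

open Equiv

abbrev G4 := Equiv.Perm (Fin 4)

def t₀ : G4 := Equiv.swap 0 1
def z₀ : G4 := Equiv.swap 0 1 * Equiv.swap 2 3

def PRel (x y : G4) : Prop := t₀ * x * t₀ * y = y * t₀ * x * t₀

instance (x y : G4) : Decidable (PRel x y) := by unfold PRel; infer_instance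

theorem P1 : ∀ x : G4, PRel x x → ¬(z₀ * x = x * z₀) →
    ((x 2 = 2 ∧ x 3 ≠ 3) ∨ (x 3 = 3 ∧ x 2 ≠ 2)) := by decide

theorem P2 : ∀ x y : G4, PRel x x → PRel y y → (PRel x y ∨ PRel y x) →
    ((x 2 = 2 → x 3 ≠ 3 → y 2 = 2) ∧ (x 3 = 3 → x 2 ≠ 2 → y 3 = 3)) := by decide

theorem P3 : ∀ c : G4, (∀ x, c x ≠ x) → c * t₀ = t₀ * c → c = z₀ := by decide

theorem P4 : ∀ i j : Fin 4, i ≠ j → ∃ ρ : G4, ρ * Equiv.swap i j * ρ⁻¹ = t₀ := by decide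

theorem t0_inv : t₀⁻¹ = t₀ := by decide
theorem z0_sq : z₀ ^ 2 = 1 := by decide
theorem z0_ne_one : z₀ ≠ 1 := by decide
theorem z0_comm_t0 : z₀ * t₀ = t₀ * z₀ := by decide
theorem t0_fix2 : t₀ 2 = 2 := by decide
theorem t0_fix3 : t₀ 3 = 3 := by decide

theorem key_fix (x y1 y2 y3 : G4) (hx : PRel x x) (h1 : PRel y1 y1) (h2 : PRel y2 y2)
    (h3 : PRel y3 y3) (p1 : PRel x y1 ∨ PRel y1 x) (p2 : PRel x y2 ∨ PRel y2 x)
    (p3 : PRel x y3 ∨ PRel y3 x) (hbad : ¬(z₀ * x = x * z₀)) :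
    (x 2 = 2 ∧ y1 2 = 2 ∧ y2 2 = 2 ∧ y3 2 = 2) ∨
    (x 3 = 3 ∧ y1 3 = 3 ∧ y2 3 = 3 ∧ y3 3 = 3) := by
  rcases P1 x hx hbad with ⟨hf, hnf⟩ | ⟨hf, hnf⟩
  · exact Or.inl ⟨hf, (P2 x y1 hx h1 p1).1 hf hnf, (P2 x y2 hx h2 p2).1 hf hnf,
      (P2 x y3 hx h3 p3).1 hf hnf⟩
  · exact Or.inr ⟨hf, (P2 x y1 hx h1 p1).2 hf hnf, (P2 x y2 hx h2 p2).2 hf hnf,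
      (P2 x y3 hx h3 p3).2 hf hnf⟩

section Phi

variable (φ : B →* G4)

/-- The images of the four surface generators under `φ`. -/
local notation "a1" => φ (PresentedGroup.of Gen.a1)
local notation "a2" => φ (PresentedGroup.of Gen.a2)
local notation "b1" => φ (PresentedGroup.of Gen.b1)
local notation "b2" => φ (PresentedGroup.of Gen.b2)

theorem rels_hold (hσ : φ σB = t₀) :
    PRel a1 a1 ∧ PRel a2 a2 ∧ PRel b1 b1 ∧ PRel b2 b2 ∧
    PRel a1 a2 ∧ PRel b1 b2 ∧ PRel a1 b2 ∧ PRel b1 a2 ∧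
    PRel a1 b1 ∧ PRel a2 b2 := by
  have hf : ∀ r ∈ rels, φ.comp (PresentedGroup.mk rels) r = 1 := by
    intro r hr
    have h1 : PresentedGroup.mk rels r = 1 :=
      (QuotientGroup.eq_one_iff r).mpr (Subgroup.subset_normalClosure hr)
    simp [MonoidHom.comp_apply, h1]
  have hfs : φ.comp (PresentedGroup.mk rels) Sg = t₀ := hσ
  have m1 : (Sg⁻¹ * A1 * Sg⁻¹ * A1 * (A1 * Sg⁻¹ * A1 * Sg⁻¹)⁻¹) ∈ rels := by unfold rels; exact Set.mem_insert _ _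
  have m2 : (Sg⁻¹ * A2 * Sg⁻¹ * A2 * (A2 * Sg⁻¹ * A2 * Sg⁻¹)⁻¹) ∈ rels := by unfold rels; exact Set.mem_insert_of_mem _ (Set.mem_insert _ _)
  have m3 : (Sg⁻¹ * B1 * Sg⁻¹ * B1 * (B1 * Sg⁻¹ * B1 * Sg⁻¹)⁻¹) ∈ rels := by unfold rels; exact Set.mem_insert_of_mem _ (Set.mem_insert_of_mem _ (Set.mem_insert _ _))
  have m4 : (Sg⁻¹ * B2 * Sg⁻¹ * B2 * (B2 * Sg⁻¹ * B2 * Sg⁻¹)⁻¹) ∈ rels := by unfold rels; exact Set.mem_insert_of_mem _ (Set.mem_insert_of_mem _ (Set.mem_insert_of_mem _ (Set.mem_insert _ _)))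
  have m5 : (Sg⁻¹ * A1 * Sg * A2 * (A2 * Sg⁻¹ * A1 * Sg)⁻¹) ∈ rels := by unfold rels; exact Set.mem_insert_of_mem _ (Set.mem_insert_of_mem _ (Set.mem_insert_of_mem _ (Set.mem_insert_of_mem _ (Set.mem_insert _ _))))
  have m6 : (Sg⁻¹ * B1 * Sg * B2 * (B2 * Sg⁻¹ * B1 * Sg)⁻¹) ∈ rels := by unfold rels; exact Set.mem_insert_of_mem _ (Set.mem_insert_of_mem _ (Set.mem_insert_of_mem _ (Set.mem_insert_of_mem _ (Set.mem_insert_of_mem _ (Set.mem_insert _ _)))))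
  have m7 : (Sg⁻¹ * A1 * Sg * B2 * (B2 * Sg⁻¹ * A1 * Sg)⁻¹) ∈ rels := by unfold rels; exact Set.mem_insert_of_mem _ (Set.mem_insert_of_mem _ (Set.mem_insert_of_mem _ (Set.mem_insert_of_mem _ (Set.mem_insert_of_mem _ (Set.mem_insert_of_mem _ (Set.mem_insert _ _))))))
  have m8 : (Sg⁻¹ * B1 * Sg * A2 * (A2 * Sg⁻¹ * B1 * Sg)⁻¹) ∈ rels := by unfold rels; exact Set.mem_insert_of_mem _ (Set.mem_insert_of_mem _ (Set.mem_insert_of_mem _ (Set.mem_insert_of_mem _ (Set.mem_insert_of_mem _ (Set.mem_insert_of_mem _ (Set.mem_insert_of_mem _ (Set.mem_insert _ _)))))))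
  have m9 : (Sg⁻¹ * A1 * Sg⁻¹ * B1 * (B1 * Sg⁻¹ * A1 * Sg)⁻¹) ∈ rels := by unfold rels; exact Set.mem_insert_of_mem _ (Set.mem_insert_of_mem _ (Set.mem_insert_of_mem _ (Set.mem_insert_of_mem _ (Set.mem_insert_of_mem _ (Set.mem_insert_of_mem _ (Set.mem_insert_of_mem _ (Set.mem_insert_of_mem _ (Set.mem_insert _ _))))))))
  have m10 : (Sg⁻¹ * A2 * Sg⁻¹ * B2 * (B2 * Sg⁻¹ * A2 * Sg)⁻¹) ∈ rels := by unfold rels; exact Set.mem_insert_of_mem _ (Set.mem_insert_of_mem _ (Set.mem_insert_of_mem _ (Set.mem_insert_of_mem _ (Set.mem_insert_of_mem _ (Set.mem_insert_of_mem _ (Set.mem_insert_of_mem _ (Set.mem_insert_of_mem _ (Set.mem_insert_of_mem _ (Set.mem_insert _ _)))))))))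
  have e1 := hf _ m1
  have e2 := hf _ m2
  have e3 := hf _ m3
  have e4 := hf _ m4
  have e5 := hf _ m5
  have e6 := hf _ m6
  have e7 := hf _ m7
  have e8 := hf _ m8
  have e9 := hf _ m9
  have e10 := hf _ m10
  simp only [map_mul, map_inv, mul_inv_eq_one, hfs, t0_inv] at e1 e2 e3 e4 e5 e6 e7 e8 e9 e10
  exact ⟨e1, e2, e3, e4, e5, e6, e7, e8, e9, e10⟩

theorem z_comm_gen (h : IsGeneric 4 φ) (hσ : φ σB = t₀) :
    ∀ g : B, z₀ * φ g = φ g * z₀ := by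
  obtain ⟨r11, r22, r33, r44, r12, r34, r14, r32, r13, r24⟩ := rels_hold φ hσ
  have fixpt : ∀ p : Fin 4, p ≠ 0 → t₀ p = p → a1 p = p → a2 p = p → b1 p = p →
      b2 p = p → False := by
    intro p hp ht h1 h2 h3 h4
    have hall : ∀ g : B, φ g p = p := by
      intro g
      have hmem := PresentedGroup.generated_by rels
        (Subgroup.comap φ (MulAction.stabilizer G4 p)) ?_ g
      · simpa [Subgroup.mem_comap, MulAction.mem_stabilizer_iff,
          Equiv.Perm.smul_def] using hmem
      · intro j
        simp only [Subgroup.mem_comap, MulAction.mem_stabilizer_iff, Equiv.Perm.smul_def]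
        cases j
        exacts [h1, h2, h3, h4, by rw [show φ (PresentedGroup.of Gen.s) = t₀ from hσ]; exact ht]
    obtain ⟨g, hg⟩ := h.2 p 0
    rw [hall g] at hg
    exact hp hg
  have hc1 : z₀ * a1 = a1 * z₀ := by
    by_contra hbad
    rcases key_fix _ _ _ _ r11 r22 r33 r44 (Or.inl r12) (Or.inl r13) (Or.inl r14) hbad with
      ⟨hx, h1, h2, h3⟩ | ⟨hx, h1, h2, h3⟩
    · exact fixpt 2 (by decide) t0_fix2 hx h1 h2 h3
    · exact fixpt 3 (by decide) t0_fix3 hx h1 h2 h3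
  have hc2 : z₀ * a2 = a2 * z₀ := by
    by_contra hbad
    rcases key_fix _ _ _ _ r22 r11 r33 r44 (Or.inr r12) (Or.inr r32) (Or.inl r24) hbad with
      ⟨hx, h1, h2, h3⟩ | ⟨hx, h1, h2, h3⟩
    · exact fixpt 2 (by decide) t0_fix2 h1 hx h2 h3
    · exact fixpt 3 (by decide) t0_fix3 h1 hx h2 h3
  have hc3 : z₀ * b1 = b1 * z₀ := by
    by_contra hbad
    rcases key_fix _ _ _ _ r33 r11 r22 r44 (Or.inr r13) (Or.inl r32) (Or.inl r34) hbad with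
      ⟨hx, h1, h2, h3⟩ | ⟨hx, h1, h2, h3⟩
    · exact fixpt 2 (by decide) t0_fix2 h1 h2 hx h3
    · exact fixpt 3 (by decide) t0_fix3 h1 h2 hx h3
  have hc4 : z₀ * b2 = b2 * z₀ := by
    by_contra hbad
    rcases key_fix _ _ _ _ r44 r11 r22 r33 (Or.inr r14) (Or.inr r24) (Or.inr r34) hbad with
      ⟨hx, h1, h2, h3⟩ | ⟨hx, h1, h2, h3⟩
    · exact fixpt 2 (by decide) t0_fix2 h1 h2 h3 hx
    · exact fixpt 3 (by decide) t0_fix3 h1 h2 h3 hx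
  intro g
  have hmem := PresentedGroup.generated_by rels
    (Subgroup.comap φ (Subgroup.centralizer {z₀})) ?_ g
  · rw [Subgroup.mem_comap, Subgroup.mem_centralizer_iff] at hmem
    exact hmem z₀ (Set.mem_singleton z₀)
  · intro j
    rw [Subgroup.mem_comap, Subgroup.mem_centralizer_iff]
    intro y hy
    rw [Set.mem_singleton_iff] at hy
    subst hy
    cases j
    exacts [hc1, hc2, hc3, hc4,
      by rw [show φ (PresentedGroup.of Gen.s) = t₀ from hσ]; exact z0_comm_t0]

theorem centralizer_class (h : IsGeneric 4 φ) (hσ : φ σB = t₀) (c : G4)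
    (hc : ∀ g : B, c * φ g = φ g * c) : c = 1 ∨ c = z₀ := by
  by_cases hfix : ∃ x : Fin 4, c x = x
  · left
    obtain ⟨x, hx⟩ := hfix
    apply Equiv.ext
    intro y
    obtain ⟨g, hg⟩ := h.2 x y
    have h2 : (c * φ g) x = (φ g * c) x := by rw [hc g]
    simp only [Equiv.Perm.mul_apply, hg, hx] at h2
    show c y = y
    exact h2
  · right
    push_neg at hfix
    refine P3 c hfix ?_
    have := hc σB
    rwa [hσ] at this

end Phi

theorem conj_generic (φ : B →* G4) (h : IsGeneric 4 φ) (τ : G4) :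
    IsGeneric 4 ((MulAut.conj τ).toMonoidHom.comp φ) := by
  constructor
  · obtain ⟨i, j, hij, hsw⟩ := h.1
    refine ⟨τ i, τ j, fun he => hij (τ.injective he), ?_⟩
    show τ * φ σB * τ⁻¹ = _
    rw [hsw]
    exact (Equiv.swap_apply_apply τ i j).symm
  · intro i j
    obtain ⟨g, hg⟩ := h.2 (τ⁻¹ i) (τ⁻¹ j)
    refine ⟨g, ?_⟩
    show (τ * φ g * τ⁻¹) i = j
    rw [Equiv.Perm.mul_apply, Equiv.Perm.mul_apply, hg]; exact τ.apply_symm_apply j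

theorem main (φ : B →* G4) (h : IsGeneric 4 φ) (hσ : φ σB = t₀) :
    Set.ncard {ψ : {ψ : B →* Equiv.Perm (Fin 4) // IsGeneric 4 ψ} |
      ∃ τ : Equiv.Perm (Fin 4), ∀ g : B, ψ.1 g = τ * φ g * τ⁻¹} = 12 := by
  classical
  have hzφ : ∀ g : B, z₀ * φ g = φ g * z₀ := z_comm_gen φ h hσ
  set M := {ψ : B →* Equiv.Perm (Fin 4) // IsGeneric 4 ψ} with hM
  let F : G4 → M := fun τ => ⟨(MulAut.conj τ).toMonoidHom.comp φ, conj_generic φ h τ⟩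
  have hFapp : ∀ (τ : G4) (g : B), (F τ).1 g = τ * φ g * τ⁻¹ := fun τ g => rfl
  have hFeq : ∀ τ τ' : G4, τ⁻¹ * τ' ∈ Subgroup.zpowers z₀ → F τ = F τ' := by
    intro τ τ' hmem
    obtain ⟨n, hn⟩ := hmem
    apply Subtype.ext
    apply MonoidHom.ext
    intro g
    rw [hFapp, hFapp]
    have hcz : Commute z₀ (φ g) := hzφ g
    have hc : (τ⁻¹ * τ') * φ g = φ g * (τ⁻¹ * τ') := by
      rw [← hn]; exact (hcz.zpow_left n)
    have hτ' : τ' = τ * (τ⁻¹ * τ') := by group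
    calc τ * φ g * τ⁻¹ = τ * ((τ⁻¹ * τ') * φ g * (τ⁻¹ * τ')⁻¹) * τ⁻¹ := by
          rw [hc, mul_inv_cancel_right]
      _ = τ' * φ g * τ'⁻¹ := by rw [hτ']; group
  have hinj : ∀ τ τ' : G4, F τ = F τ' → τ⁻¹ * τ' ∈ Subgroup.zpowers z₀ := by
    intro τ τ' hF
    have hg : ∀ g : B, τ * φ g * τ⁻¹ = τ' * φ g * τ'⁻¹ := by
      intro g
      rw [← hFapp τ g, ← hFapp τ' g, hF]
    have hc : ∀ g : B, (τ⁻¹ * τ') * φ g = φ g * (τ⁻¹ * τ') := by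
      intro g
      calc (τ⁻¹ * τ') * φ g = τ⁻¹ * (τ' * φ g * τ'⁻¹) * τ' := by group
        _ = τ⁻¹ * (τ * φ g * τ⁻¹) * τ' := by rw [hg g]
        _ = φ g * (τ⁻¹ * τ') := by group
    rcases centralizer_class φ h hσ _ hc with h1 | h1
    · rw [h1]; exact one_mem _
    · rw [h1]; exact Subgroup.mem_zpowers z₀
  have hS : {ψ : M | ∃ τ : Equiv.Perm (Fin 4), ∀ g : B, ψ.1 g = τ * φ g * τ⁻¹} =
      Set.range F := by
    ext ψ
    constructor
    · rintro ⟨τ, hτ⟩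
      refine ⟨τ, ?_⟩
      apply Subtype.ext
      apply MonoidHom.ext
      intro g
      rw [hFapp, ← hτ g]
    · rintro ⟨τ, rfl⟩
      exact ⟨τ, fun g => (hFapp τ g).symm⟩
  let H : Subgroup G4 := Subgroup.zpowers z₀
  let e : G4 ⧸ H → Set.range F := fun q =>
    Quotient.liftOn' q (fun τ => (⟨F τ, τ, rfl⟩ : Set.range F)) (by
      intro a b hab
      have : a⁻¹ * b ∈ H := QuotientGroup.leftRel_apply.mp hab
      exact Subtype.ext (hFeq a b this))
  have hbij : Function.Bijective e := by
    constructor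
    · intro q q'
      refine Quotient.inductionOn₂' q q' ?_
      intro τ τ' hee
      have hFF : F τ = F τ' := congrArg Subtype.val hee
      exact Quotient.sound' (QuotientGroup.leftRel_apply.mpr (hinj τ τ' hFF))
    · rintro ⟨ψ, τ, rfl⟩
      exact ⟨QuotientGroup.mk τ, rfl⟩
  have h24 : Nat.card G4 = 24 := by
    rw [Nat.card_eq_fintype_card, Fintype.card_perm, Fintype.card_fin]
    rfl
  have hH2 : Nat.card H = 2 := by
    rw [Nat.card_zpowers]
    exact orderOf_eq_prime z0_sq z0_ne_one
  have hQ : Nat.card (G4 ⧸ H) = 12 := by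
    have := Subgroup.card_eq_card_quotient_mul_card_subgroup H
    rw [h24, hH2] at this
    omega
  have hrange : Nat.card (Set.range F) = 12 := by
    rw [← Nat.card_congr (Equiv.ofBijective e hbij)]
    exact hQ
  rw [hS, ← Nat.card_coe_set_eq]
  exact hrange

end BraidAux

open BraidAux

/-- Every orbit of the conjugation action of S₄ on the set of generic
monodromy representations of B in S₄ consists of exactly 12 elements. -/
theorem stmt8 (φ : B →* Equiv.Perm (Fin 4)) (h : IsGeneric 4 φ) :
    Set.ncard {ψ : {ψ : B →* Equiv.Perm (Fin 4) // IsGeneric 4 ψ} |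
      ∃ τ : Equiv.Perm (Fin 4), ∀ g : B, ψ.1 g = τ * φ g * τ⁻¹} = 12 := by
  obtain ⟨i, j, hij, hsw⟩ := h.1
  obtain ⟨ρ, hρ⟩ := P4 i j hij
  set φ' : B →* Equiv.Perm (Fin 4) := (MulAut.conj ρ).toMonoidHom.comp φ with hφ'
  have h' : IsGeneric 4 φ' := conj_generic φ h ρ
  have hσ' : φ' σB = t₀ := by
    show ρ * φ σB * ρ⁻¹ = t₀
    rw [hsw]
    exact hρ
  have happ : ∀ g : B, φ' g = ρ * φ g * ρ⁻¹ := fun g => rfl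
  have hset : {ψ : {ψ : B →* Equiv.Perm (Fin 4) // IsGeneric 4 ψ} |
      ∃ τ : Equiv.Perm (Fin 4), ∀ g : B, ψ.1 g = τ * φ g * τ⁻¹} =
      {ψ : {ψ : B →* Equiv.Perm (Fin 4) // IsGeneric 4 ψ} |
      ∃ τ : Equiv.Perm (Fin 4), ∀ g : B, ψ.1 g = τ * φ' g * τ⁻¹} := by
    ext ψ
    constructor
    · rintro ⟨τ, hτ⟩
      refine ⟨τ * ρ⁻¹, fun g => ?_⟩
      rw [hτ g, happ g]
      group
    · rintro ⟨τ, hτ⟩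
      refine ⟨τ * ρ, fun g => ?_⟩
      rw [hτ g, happ g]
      group
  rw [hset]
  exact main φ' h' hσ'
end

section
/- There are no generic monodromy representations of B in S₅; that is, there is no group homomorphism φ: B → S₅ such that φ(σ) is a transposition and the image of φ is a transitive subgroup of S₅. -/
open Braid

section Decidestuff

def sf : Fin 5 → Fin 5 := fun k => if k = 0 then 1 else if k = 1 then 0 else k

def R2f (x : Fin 5 → Fin 5) : Prop := ∀ k, sf (x (sf (x k))) = x (sf (x (sf k)))
def pcf (x y : Fin 5 → Fin 5) : Prop := ∀ k, sf (x (sf (y k))) = y (sf (x (sf k)))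
def ccf (x y : Fin 5 → Fin 5) : Prop := x = y ∨ (pcf x y ∧ pcf y x)
def Of (x : Fin 5 → Fin 5) : Finset (Fin 5) :=
  Finset.univ.filter (fun j => ∃ k : Fin 5, x^[(k : ℕ)] 0 = j ∨ x^[(k : ℕ)] 1 = j)

def FN (x0 x1 x2 x3 x4 : Fin 5) : Fin 5 → Fin 5 := fun k =>
  if k = 0 then x0 else if k = 1 then x1 else if k = 2 then x2 else if k = 3 then x3 else x4

instance : DecidablePred R2f := fun x =>
  inferInstanceAs (Decidable (∀ k, sf (x (sf (x k))) = x (sf (x (sf k)))))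
instance (x y : Fin 5 → Fin 5) : Decidable (pcf x y) :=
  inferInstanceAs (Decidable (∀ k, sf (x (sf (y k))) = y (sf (x (sf k)))))
instance (x y : Fin 5 → Fin 5) : Decidable (ccf x y) :=
  inferInstanceAs (Decidable (x = y ∨ (pcf x y ∧ pcf y x)))

set_option maxHeartbeats 4000000 in
lemma pair_lemma : ∀ x0 x1 x2 x3 x4 : Fin 5, Function.Bijective (FN x0 x1 x2 x3 x4) →
    R2f (FN x0 x1 x2 x3 x4) →
    ∀ y0 y1 y2 y3 y4 : Fin 5, Function.Bijective (FN y0 y1 y2 y3 y4) →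
    R2f (FN y0 y1 y2 y3 y4) →
    ccf (FN x0 x1 x2 x3 x4) (FN y0 y1 y2 y3 y4) →
    (∀ m ∈ Of (FN x0 x1 x2 x3 x4) ∪ Of (FN y0 y1 y2 y3 y4),
      FN x0 x1 x2 x3 x4 m ∈ Of (FN x0 x1 x2 x3 x4) ∪ Of (FN y0 y1 y2 y3 y4)) ∧
    (Of (FN x0 x1 x2 x3 x4) ∪ Of (FN y0 y1 y2 y3 y4) = Of (FN x0 x1 x2 x3 x4) ∨
     Of (FN x0 x1 x2 x3 x4) ∪ Of (FN y0 y1 y2 y3 y4) = Of (FN y0 y1 y2 y3 y4)) ∧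
    Of (FN x0 x1 x2 x3 x4) ∪ Of (FN y0 y1 y2 y3 y4) ≠ Finset.univ := by decide

lemma FN_eta (f : Fin 5 → Fin 5) : FN (f 0) (f 1) (f 2) (f 3) (f 4) = f := by
  funext k; fin_cases k <;> rfl

lemma PL (f g : Fin 5 → Fin 5) (hf : R2f f) (hbf : Function.Bijective f)
    (hg : R2f g) (hbg : Function.Bijective g) (hc : ccf f g) :
    (∀ m ∈ Of f ∪ Of g, f m ∈ Of f ∪ Of g) ∧
    (Of f ∪ Of g = Of f ∨ Of f ∪ Of g = Of g) ∧ Of f ∪ Of g ≠ Finset.univ := by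
  have h := pair_lemma (f 0) (f 1) (f 2) (f 3) (f 4)
  rw [FN_eta f] at h
  have h2 := h hbf hf (g 0) (g 1) (g 2) (g 3) (g 4)
  rw [FN_eta g] at h2
  exact h2 hbg hg hc

lemma sf_coe : ⇑(Equiv.swap (0 : Fin 5) 1) = sf := by
  funext k; revert k; decide

lemma sf_sf (m : Fin 5) : sf (sf m) = m := by revert m; decide

lemma pcf_rev {x y : Fin 5 → Fin 5} (h : pcf x y) : pcf y x := by
  intro k
  have h1 := h (sf k)
  rw [sf_sf] at h1
  have h2 := congrArg sf h1
  rw [sf_sf] at h2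
  exact h2.symm

lemma mem_Of_zero (f : Fin 5 → Fin 5) : (0 : Fin 5) ∈ Of f :=
  Finset.mem_filter.mpr ⟨Finset.mem_univ _, ⟨0, Or.inl rfl⟩⟩

lemma mem_Of_one (f : Fin 5 → Fin 5) : (1 : Fin 5) ∈ Of f :=
  Finset.mem_filter.mpr ⟨Finset.mem_univ _, ⟨0, Or.inr rfl⟩⟩

/-- a permutation `x` of `Fin 5` whose orbit-set generation is self-contained -/
def πd (i j : Fin 5) : Equiv.Perm (Fin 5) :=
  Equiv.swap (Equiv.swap i 0 j) 1 * Equiv.swap i 0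

lemma conj_swap : ∀ i j : Fin 5, i ≠ j →
    ∀ k, ((πd i j) * Equiv.swap i j * (πd i j)⁻¹) k = Equiv.swap 0 1 k := by decide

end Decidestuff

/-- There are no generic monodromy representations of B in S₅. -/
theorem stmt9 : ¬ ∃ φ : B →* Equiv.Perm (Fin 5), IsGeneric 5 φ := by
  rintro ⟨φ, hswap, htrans⟩
  obtain ⟨i, j, hij, hsw⟩ := hswap
  set π : Equiv.Perm (Fin 5) := πd i j with hπ
  set ψ : B →* Equiv.Perm (Fin 5) := (MulAut.conj π).toMonoidHom.comp φ with hψdef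
  have hψapp : ∀ g : B, ψ g = π * φ g * π⁻¹ := fun g => rfl
  have hσ : ψ σB = Equiv.swap 0 1 := by
    rw [hψapp, hsw]; exact Equiv.ext (conj_swap i j hij)
  have htr : ∀ a b : Fin 5, ∃ g : B, ψ g a = b := by
    intro a b
    obtain ⟨g, hg⟩ := htrans (π⁻¹ a) (π⁻¹ b)
    refine ⟨g, ?_⟩
    rw [hψapp]
    simp only [Equiv.Perm.mul_apply, hg]; exact π.apply_symm_apply b
  -- the images of the generators
  set Y : Gen → Equiv.Perm (Fin 5) := fun g => ψ (PresentedGroup.of g) with hY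
  have hYs : Y Gen.s = Equiv.swap 0 1 := hσ
  -- relations hold
  have hrelmk : ∀ r ∈ rels, ψ (PresentedGroup.mk rels r) = 1 := by
    intro r hr
    have h1 : PresentedGroup.mk rels r = 1 :=
      (QuotientGroup.eq_one_iff r).mpr (Subgroup.subset_normalClosure hr)
    rw [h1, map_one]
  have hmkof : ∀ g : Gen, ψ (PresentedGroup.mk rels (FreeGroup.of g)) = Y g := fun _ => rfl
  -- helper: turn perm equalities into pointwise function facts
  have toR2f : ∀ E : Equiv.Perm (Fin 5),
      (Equiv.swap 0 1)⁻¹ * E * (Equiv.swap 0 1)⁻¹ * E = E * (Equiv.swap 0 1)⁻¹ * E * (Equiv.swap 0 1)⁻¹ →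
      R2f ⇑E := by
    intro E h k
    have := Equiv.ext_iff.mp h k
    simpa [Equiv.Perm.mul_apply, Equiv.swap_inv, sf_coe] using this
  have topcf : ∀ E F : Equiv.Perm (Fin 5),
      (Equiv.swap 0 1)⁻¹ * E * (Equiv.swap 0 1) * F = F * (Equiv.swap 0 1)⁻¹ * E * (Equiv.swap 0 1) →
      pcf ⇑E ⇑F := by
    intro E F h k
    have := Equiv.ext_iff.mp h k
    simpa [Equiv.Perm.mul_apply, Equiv.swap_inv, sf_coe] using this
  have topcf' : ∀ E F : Equiv.Perm (Fin 5),
      (Equiv.swap 0 1)⁻¹ * E * (Equiv.swap 0 1)⁻¹ * F = F * (Equiv.swap 0 1)⁻¹ * E * (Equiv.swap 0 1) →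
      pcf ⇑E ⇑F := by
    intro E F h k
    have := Equiv.ext_iff.mp h k
    simpa [Equiv.Perm.mul_apply, Equiv.swap_inv, sf_coe] using this
  -- membership of the eleven relators
  have m1 : (Sg⁻¹ * A1 * Sg⁻¹ * A1 * (A1 * Sg⁻¹ * A1 * Sg⁻¹)⁻¹) ∈ rels := by
    unfold rels; left; rfl
  have m3 : (Sg⁻¹ * B1 * Sg⁻¹ * B1 * (B1 * Sg⁻¹ * B1 * Sg⁻¹)⁻¹) ∈ rels := by
    unfold rels; right; right; left; rfl
  have m2 : (Sg⁻¹ * A2 * Sg⁻¹ * A2 * (A2 * Sg⁻¹ * A2 * Sg⁻¹)⁻¹) ∈ rels := by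
    unfold rels; right; left; rfl
  have m4 : (Sg⁻¹ * B2 * Sg⁻¹ * B2 * (B2 * Sg⁻¹ * B2 * Sg⁻¹)⁻¹) ∈ rels := by
    unfold rels; right; right; right; left; rfl
  have m5 : (Sg⁻¹ * A1 * Sg * A2 * (A2 * Sg⁻¹ * A1 * Sg)⁻¹) ∈ rels := by
    unfold rels; right; right; right; right; left; rfl
  have m6 : (Sg⁻¹ * B1 * Sg * B2 * (B2 * Sg⁻¹ * B1 * Sg)⁻¹) ∈ rels := by
    unfold rels; right; right; right; right; right; left; rfl
  have m7 : (Sg⁻¹ * A1 * Sg * B2 * (B2 * Sg⁻¹ * A1 * Sg)⁻¹) ∈ rels := by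
    unfold rels; right; right; right; right; right; right; left; rfl
  have m8 : (Sg⁻¹ * B1 * Sg * A2 * (A2 * Sg⁻¹ * B1 * Sg)⁻¹) ∈ rels := by
    unfold rels; right; right; right; right; right; right; right; left; rfl
  have m9 : (Sg⁻¹ * A1 * Sg⁻¹ * B1 * (B1 * Sg⁻¹ * A1 * Sg)⁻¹) ∈ rels := by
    unfold rels; right; right; right; right; right; right; right; right; left; rfl
  have m10 : (Sg⁻¹ * A2 * Sg⁻¹ * B2 * (B2 * Sg⁻¹ * A2 * Sg)⁻¹) ∈ rels := by
    unfold rels; right; right; right; right; right; right; right; right; right; left; rfl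
  -- the function-level relation facts
  have hR2a1 : R2f ⇑(Y Gen.a1) := by
    have h := hrelmk _ m1
    simp only [map_mul, map_inv, hmkof] at h
    have h2 := mul_inv_eq_one.mp h
    rw [hYs] at h2
    exact toR2f _ h2
  have hR2a2 : R2f ⇑(Y Gen.a2) := by
    have h := hrelmk _ m2
    simp only [map_mul, map_inv, hmkof] at h
    have h2 := mul_inv_eq_one.mp h
    rw [hYs] at h2
    exact toR2f _ h2
  have hR2b1 : R2f ⇑(Y Gen.b1) := by
    have h := hrelmk _ m3
    simp only [map_mul, map_inv, hmkof] at h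
    have h2 := mul_inv_eq_one.mp h
    rw [hYs] at h2
    exact toR2f _ h2
  have hR2b2 : R2f ⇑(Y Gen.b2) := by
    have h := hrelmk _ m4
    simp only [map_mul, map_inv, hmkof] at h
    have h2 := mul_inv_eq_one.mp h
    rw [hYs] at h2
    exact toR2f _ h2
  have hPa1a2 : pcf ⇑(Y Gen.a1) ⇑(Y Gen.a2) := by
    have h := hrelmk _ m5
    simp only [map_mul, map_inv, hmkof] at h
    have h2 := mul_inv_eq_one.mp h
    rw [hYs] at h2
    exact topcf _ _ h2
  have hPb1b2 : pcf ⇑(Y Gen.b1) ⇑(Y Gen.b2) := by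
    have h := hrelmk _ m6
    simp only [map_mul, map_inv, hmkof] at h
    have h2 := mul_inv_eq_one.mp h
    rw [hYs] at h2
    exact topcf _ _ h2
  have hPa1b2 : pcf ⇑(Y Gen.a1) ⇑(Y Gen.b2) := by
    have h := hrelmk _ m7
    simp only [map_mul, map_inv, hmkof] at h
    have h2 := mul_inv_eq_one.mp h
    rw [hYs] at h2
    exact topcf _ _ h2
  have hPb1a2 : pcf ⇑(Y Gen.b1) ⇑(Y Gen.a2) := by
    have h := hrelmk _ m8
    simp only [map_mul, map_inv, hmkof] at h
    have h2 := mul_inv_eq_one.mp h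
    rw [hYs] at h2
    exact topcf _ _ h2
  have hPa1b1 : pcf ⇑(Y Gen.a1) ⇑(Y Gen.b1) := by
    have h := hrelmk _ m9
    simp only [map_mul, map_inv, hmkof] at h
    have h2 := mul_inv_eq_one.mp h
    rw [hYs] at h2
    exact topcf' _ _ h2
  have hPa2b2 : pcf ⇑(Y Gen.a2) ⇑(Y Gen.b2) := by
    have h := hrelmk _ m10
    simp only [map_mul, map_inv, hmkof] at h
    have h2 := mul_inv_eq_one.mp h
    rw [hYs] at h2
    exact topcf' _ _ h2
  -- package the four generator images
  set fs : Fin 4 → (Fin 5 → Fin 5) := fun p =>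
    if p = 0 then ⇑(Y Gen.a1) else if p = 1 then ⇑(Y Gen.b1)
    else if p = 2 then ⇑(Y Gen.a2) else ⇑(Y Gen.b2) with hfs
  have hR2I : ∀ p, R2f (fs p) := by
    intro p; fin_cases p
    exacts [hR2a1, hR2b1, hR2a2, hR2b2]
  have hbI : ∀ p, Function.Bijective (fs p) := by
    intro p; fin_cases p
    exacts [(Y Gen.a1).bijective, (Y Gen.b1).bijective, (Y Gen.a2).bijective, (Y Gen.b2).bijective]
  have hccI : ∀ p q, ccf (fs p) (fs q) := by
    intro p q; fin_cases p <;> fin_cases q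
    exacts [Or.inl rfl, Or.inr ⟨hPa1b1, pcf_rev hPa1b1⟩, Or.inr ⟨hPa1a2, pcf_rev hPa1a2⟩,
      Or.inr ⟨hPa1b2, pcf_rev hPa1b2⟩,
      Or.inr ⟨pcf_rev hPa1b1, hPa1b1⟩, Or.inl rfl, Or.inr ⟨hPb1a2, pcf_rev hPb1a2⟩,
      Or.inr ⟨hPb1b2, pcf_rev hPb1b2⟩,
      Or.inr ⟨pcf_rev hPa1a2, hPa1a2⟩, Or.inr ⟨pcf_rev hPb1a2, hPb1a2⟩, Or.inl rfl,
      Or.inr ⟨hPa2b2, pcf_rev hPa2b2⟩,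
      Or.inr ⟨pcf_rev hPa1b2, hPa1b2⟩, Or.inr ⟨pcf_rev hPb1b2, hPb1b2⟩,
      Or.inr ⟨pcf_rev hPa2b2, hPa2b2⟩, Or.inl rfl]
  have cmpI : ∀ p q, Of (fs p) ⊆ Of (fs q) ∨ Of (fs q) ⊆ Of (fs p) := by
    intro p q
    rcases (PL (fs p) (fs q) (hR2I p) (hbI p) (hR2I q) (hbI q) (hccI p q)).2.1 with h | h
    · right; exact h ▸ Finset.subset_union_right
    · left; exact h ▸ Finset.subset_union_left
  -- find the maximum orbit set
  obtain ⟨m1', hm0, hm1⟩ : ∃ m, Of (fs 0) ⊆ Of (fs m) ∧ Of (fs 1) ⊆ Of (fs m) := by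
    rcases cmpI 0 1 with h | h
    exacts [⟨1, h, subset_rfl⟩, ⟨0, subset_rfl, h⟩]
  obtain ⟨m2', hn0, hn1, hn2⟩ : ∃ m, Of (fs 0) ⊆ Of (fs m) ∧ Of (fs 1) ⊆ Of (fs m) ∧
      Of (fs 2) ⊆ Of (fs m) := by
    rcases cmpI m1' 2 with h | h
    exacts [⟨2, hm0.trans h, hm1.trans h, subset_rfl⟩, ⟨m1', hm0, hm1, h⟩]
  obtain ⟨mx, hx0, hx1, hx2, hx3⟩ : ∃ m, Of (fs 0) ⊆ Of (fs m) ∧ Of (fs 1) ⊆ Of (fs m) ∧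
      Of (fs 2) ⊆ Of (fs m) ∧ Of (fs 3) ⊆ Of (fs m) := by
    rcases cmpI m2' 3 with h | h
    exacts [⟨3, hn0.trans h, hn1.trans h, hn2.trans h, subset_rfl⟩, ⟨m2', hn0, hn1, hn2, h⟩]
  have hmx : ∀ p, Of (fs p) ⊆ Of (fs mx) := by
    intro p; fin_cases p
    exacts [hx0, hx1, hx2, hx3]
  set S : Finset (Fin 5) := Of (fs mx) with hS
  have hSne : S ≠ Finset.univ := by
    have h := (PL (fs mx) (fs mx) (hR2I mx) (hbI mx) (hR2I mx) (hbI mx) (hccI mx mx)).2.2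
    rwa [Finset.union_self] at h
  have hinv : ∀ p, ∀ k ∈ S, fs p k ∈ S := by
    intro p k hk
    have hu : Of (fs p) ∪ Of (fs mx) = S := Finset.union_eq_right.mpr (hmx p)
    have h := (PL (fs p) (fs mx) (hR2I p) (hbI p) (hR2I mx) (hbI mx) (hccI p mx)).1 k
      (by rw [hu]; exact hk)
    rwa [hu] at h
  have hsfS : ∀ k ∈ S, sf k ∈ S := by
    intro k hk
    by_cases h0 : k = 0
    · subst h0
      have : sf 0 = 1 := rfl
      rw [this]; exact mem_Of_one _
    by_cases h1 : k = 1
    · subst h1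
      have : sf 1 = 0 := rfl
      rw [this]; exact mem_Of_zero _
    · have : sf k = k := by simp [sf, h0, h1]
      rw [this]; exact hk
  -- the invariant-set subgroup
  set H : Subgroup B :=
    { carrier := {g : B | ∀ k ∈ S, ψ g k ∈ S}
      one_mem' := by intro k hk; simpa using hk
      mul_mem' := by
        intro a b ha hb k hk
        rw [map_mul, Equiv.Perm.mul_apply]
        exact ha _ (hb _ hk)
      inv_mem' := by
        intro g hg k hk
        have himg : S.image ⇑(ψ g) = S := by
          refine Finset.eq_of_subset_of_card_le ?_ (le_of_eq ?_)
          · intro t ht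
            obtain ⟨u, hu, rfl⟩ := Finset.mem_image.mp ht
            exact hg u hu
          · exact (Finset.card_image_of_injective S (ψ g).injective).symm
        rw [← himg] at hk
        obtain ⟨u, hu, he⟩ := Finset.mem_image.mp hk
        rw [map_inv, ← he]
        simpa using hu } with hH
  have hgen : ∀ g : Gen, PresentedGroup.of (rels := rels) g ∈ H := by
    intro g
    cases g
    case a1 => exact hinv 0
    case b1 => exact hinv 1
    case a2 => exact hinv 2
    case b2 => exact hinv 3
    case s =>
      intro k hk
      have h1 : ψ (PresentedGroup.of Gen.s) = Equiv.swap 0 1 := hσ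
      rw [h1]
      have h2 : Equiv.swap (0 : Fin 5) 1 k = sf k := congrFun sf_coe k
      rw [h2]
      exact hsfS k hk
  have hallH : ∀ g : B, g ∈ H := fun g => PresentedGroup.generated_by rels H hgen g
  obtain ⟨t, ht⟩ : ∃ t : Fin 5, t ∉ S := by
    by_contra hcon
    push_neg at hcon
    exact hSne (Finset.eq_univ_iff_forall.mpr hcon)
  obtain ⟨g, hg⟩ := htr 0 t
  exact ht (hg ▸ hallH g 0 (mem_Of_zero _))
end

section
/- There are no generic monodromy representations of B in S₉; that is, there is no group homomorphism φ: B → S₉ such that φ(σ) is a transposition and the image of φ is a transitive subgroup of S₉. -/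
open Braid

theorem Equiv.Perm.inv_apply_self {α : Type*} (f : Equiv.Perm α) (x : α) : f⁻¹ (f x) = x :=
  f.symm_apply_apply x

theorem Equiv.Perm.apply_inv_self {α : Type*} (f : Equiv.Perm α) (x : α) : f (f⁻¹ x) = x :=
  f.apply_symm_apply x

section BraidAuxSec

open Equiv Subgroup

namespace BraidAux

lemma comm_conj {P : Type*} [Group P] {s x y : P} (hss : s * s = 1)
    (h : Commute (s * x * s) y) : Commute (s * y * s) x := by
  have hsinv : s⁻¹ = s := by rw [inv_eq_iff_mul_eq_one, hss]
  have h2 := (h.map (MulAut.conj s)).symm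
  simp only [MulAut.conj_apply, hsinv] at h2
  have e1 : s * (s * x * s) * s = x := by
    calc s * (s * x * s) * s = (s * s) * x * (s * s) := by group
    _ = x := by rw [hss]; group
  rwa [e1] at h2

variable {n : ℕ}

lemma eq_one_of_fix {T : Set (Equiv.Perm (Fin n))}
    (htr : ∀ x y : Fin n, ∃ k ∈ T, k x = y) {w : Equiv.Perm (Fin n)}
    (hc : ∀ k ∈ T, Commute w k) {x : Fin n} (hx : w x = x) : w = 1 := by
  ext y
  obtain ⟨k, hk, hky⟩ := htr x y
  have h1 : (w * k) x = (k * w) x := by rw [(hc k hk).eq]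
  simp only [Equiv.Perm.mul_apply, hx, hky] at h1
  simp [h1]

lemma card4 (a b c d : Fin 9) : ({a, b, c, d} : Finset (Fin 9)).card ≤ 4 := by
  refine (Finset.card_insert_le _ _).trans (Nat.succ_le_succ ?_)
  refine (Finset.card_insert_le _ _).trans (Nat.succ_le_succ ?_)
  refine (Finset.card_insert_le _ _).trans (Nat.succ_le_succ ?_)
  simp

lemma exists_notin (a b c d : Fin 9) : ∃ x : Fin 9, x ≠ a ∧ x ≠ b ∧ x ≠ c ∧ x ≠ d := by
  by_contra h
  push_neg at h
  have hsub : (Finset.univ : Finset (Fin 9)) ⊆ {a, b, c, d} := by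
    intro x _
    simp only [Finset.mem_insert, Finset.mem_singleton]
    by_contra hx
    push_neg at hx
    exact hx.2.2.2 (h x hx.1 hx.2.1 hx.2.2.1)
  have := (Finset.card_le_card hsub).trans (card4 a b c d)
  simp at this

theorem key (s a b c d : Equiv.Perm (Fin 9)) (hs : s.IsSwap)
    (hcomm : ∀ x ∈ ({a, b, c, d} : Set (Equiv.Perm (Fin 9))),
      ∀ y ∈ ({a, b, c, d} : Set (Equiv.Perm (Fin 9))), Commute (s * x * s) y)
    (htrans : ∀ i j : Fin 9,
      ∃ g ∈ Subgroup.closure ({a, b, c, d, s} : Set (Equiv.Perm (Fin 9))), g i = j) :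
    False := by
  classical
  obtain ⟨p, q, hpq, rfl⟩ := hs
  set s := Equiv.swap p q with hsdef
  have hss : s * s = 1 := Equiv.swap_mul_self p q
  have hsinv : s⁻¹ = s := Equiv.swap_inv p q
  have hsfix : ∀ x : Fin 9, x ≠ p → x ≠ q → s x = x := fun x h1 h2 =>
    Equiv.swap_apply_of_ne_of_ne h1 h2
  set gens : Set (Equiv.Perm (Fin 9)) := {a, b, c, d} with hgens
  set K : Subgroup (Equiv.Perm (Fin 9)) := Subgroup.closure gens with hK
  -- conjugation formula
  have hconj2 : ∀ g₁ g₂ : Equiv.Perm (Fin 9),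
      (s * g₁ * s) * (s * g₂ * s) = s * (g₁ * g₂) * s := by
    intro g₁ g₂
    calc (s * g₁ * s) * (s * g₂ * s) = s * g₁ * (s * s) * g₂ * s := by group
    _ = s * (g₁ * g₂) * s := by rw [hss]; group
  have hconjinv : ∀ g : Equiv.Perm (Fin 9), (s * g * s)⁻¹ = s * g⁻¹ * s := by
    intro g
    simp [mul_inv_rev, hsinv, mul_assoc]
  -- every element of s K s commutes with every element of K
  have hKc : ∀ g ∈ K, ∀ h ∈ K, Commute (s * g * s) h := by
    intro g hg
    refine Subgroup.closure_induction
      (p := fun g _ => ∀ h ∈ K, Commute (s * g * s) h) ?_ ?_ ?_ ?_ hg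
    · intro x hx h hh
      refine Subgroup.closure_induction
        (p := fun h _ => Commute (s * x * s) h) ?_ ?_ ?_ ?_ hh
      · intro y hy; exact hcomm x hx y hy
      · exact Commute.one_right _
      · intro y z _ _ h1 h2; exact h1.mul_right h2
      · intro y _ h1; exact h1.inv_right
    · intro h hh
      have : s * 1 * s = 1 := by rw [mul_one, hss]
      rw [this]; exact Commute.one_left _
    · intro x y _ _ h1 h2 h hh
      rw [← hconj2]; exact (h1 h hh).mul_left (h2 h hh)
    · intro x _ h1 h hh
      rw [← hconjinv]; exact (h1 h hh).inv_left
  -- the bigger group M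
  set gens8 : Set (Equiv.Perm (Fin 9)) :=
    {a, b, c, d, s * a * s, s * b * s, s * c * s, s * d * s} with hgens8
  set M : Subgroup (Equiv.Perm (Fin 9)) := Subgroup.closure gens8 with hM
  have hKM : K ≤ M := Subgroup.closure_mono (by intro x hx; simp only [hgens, hgens8,
    Set.mem_insert_iff, Set.mem_singleton_iff] at hx ⊢; tauto)
  have hginK : ∀ x ∈ gens, x ∈ K := fun x hx => Subgroup.subset_closure hx
  -- conjugation by s preserves M
  have hsMs : ∀ m ∈ M, s * m * s ∈ M := by
    intro m hm
    refine Subgroup.closure_induction (p := fun m _ => s * m * s ∈ M) ?_ ?_ ?_ ?_ hm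
    · intro x hx
      simp only [hgens8, Set.mem_insert_iff, Set.mem_singleton_iff] at hx
      rcases hx with rfl | rfl | rfl | rfl | rfl | rfl | rfl | rfl
      · exact Subgroup.subset_closure (by simp [hgens8])
      · exact Subgroup.subset_closure (by simp [hgens8])
      · exact Subgroup.subset_closure (by simp [hgens8])
      · exact Subgroup.subset_closure (by simp [hgens8])
      all_goals {
        rw [show ∀ u : Equiv.Perm (Fin 9), s * (s * u * s) * s = u from ?_]
        · exact Subgroup.subset_closure (by simp [hgens8])
        · intro u
          calc s * (s * u * s) * s = (s * s) * u * (s * s) := by group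
          _ = u := by rw [hss]; group }
    · show s * 1 * s ∈ M
      rw [mul_one, hss]; exact one_mem M
    · intro x y _ _ h1 h2
      rw [← hconj2]; exact mul_mem h1 h2
    · intro x _ h1
      rw [← hconjinv]; exact inv_mem h1
  -- conjugation by elements of M preserves K (in iff form)
  have hMnorm : ∀ m ∈ M, ∀ k : Equiv.Perm (Fin 9), (k ∈ K ↔ m * k * m⁻¹ ∈ K) := by
    intro m hm
    refine Subgroup.closure_induction
      (p := fun m _ => ∀ k : Equiv.Perm (Fin 9), (k ∈ K ↔ m * k * m⁻¹ ∈ K)) ?_ ?_ ?_ ?_ hm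
    · intro x hx k
      have hcase : x ∈ K ∨ ∃ g ∈ K, x = s * g * s := by
        simp only [hgens8, Set.mem_insert_iff, Set.mem_singleton_iff] at hx
        rcases hx with rfl | rfl | rfl | rfl | rfl | rfl | rfl | rfl
        · exact Or.inl (hginK _ (by simp [hgens]))
        · exact Or.inl (hginK _ (by simp [hgens]))
        · exact Or.inl (hginK _ (by simp [hgens]))
        · exact Or.inl (hginK _ (by simp [hgens]))
        · exact Or.inr ⟨a, hginK _ (by simp [hgens]), rfl⟩
        · exact Or.inr ⟨b, hginK _ (by simp [hgens]), rfl⟩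
        · exact Or.inr ⟨c, hginK _ (by simp [hgens]), rfl⟩
        · exact Or.inr ⟨d, hginK _ (by simp [hgens]), rfl⟩
      rcases hcase with hxK | ⟨g, hgK, rfl⟩
      · constructor
        · intro hk; exact mul_mem (mul_mem hxK hk) (inv_mem hxK)
        · intro hk
          have h2 := mul_mem (mul_mem (inv_mem hxK) hk) hxK
          have e : x⁻¹ * (x * k * x⁻¹) * x = k := by group
          rwa [e] at h2
      · constructor
        · intro hk
          have e : (s * g * s) * k * (s * g * s)⁻¹ = k := by
            rw [(hKc g hgK k hk).eq]
            group
          rwa [e]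
        · intro hk
          have hc := (hKc g hgK _ hk).eq
          have ekey : k = (s * g * s) * k * (s * g * s)⁻¹ := by
            calc k = (s * g * s)⁻¹ * (((s * g * s) * k * (s * g * s)⁻¹) * (s * g * s)) := by
                  group
            _ = (s * g * s)⁻¹ * ((s * g * s) * ((s * g * s) * k * (s * g * s)⁻¹)) := by
                  rw [← hc]
            _ = (s * g * s) * k * (s * g * s)⁻¹ := by group
          exact ekey ▸ hk
    · intro k
      constructor
      · intro hk; simpa using hk
      · intro hk; simpa using hk
    · intro x y _ _ hx hy k
      have e : (x * y) * k * (x * y)⁻¹ = x * (y * k * y⁻¹) * x⁻¹ := by group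
      rw [e, ← hx (y * k * y⁻¹)]
      exact hy k
    · intro x _ hx k
      have h2 := hx (x⁻¹ * k * x)
      have e : x * (x⁻¹ * k * x) * x⁻¹ = k := by group
      rw [e] at h2
      have e2 : x⁻¹ * k * x⁻¹⁻¹ = x⁻¹ * k * x := by rw [inv_inv]
      rw [e2]
      exact h2.symm
  -- every element of the full transitive group lies in M ∪ M s
  have hMs : ∀ g ∈ Subgroup.closure ({a, b, c, d, s} : Set (Equiv.Perm (Fin 9))),
      g ∈ M ∨ g * s ∈ M := by
    intro g hg
    refine Subgroup.closure_induction (p := fun g _ => g ∈ M ∨ g * s ∈ M) ?_ ?_ ?_ ?_ hg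
    · intro x hx
      simp only [Set.mem_insert_iff, Set.mem_singleton_iff] at hx
      rcases hx with rfl | rfl | rfl | rfl | rfl
      · exact Or.inl (hKM (hginK _ (by simp [hgens])))
      · exact Or.inl (hKM (hginK _ (by simp [hgens])))
      · exact Or.inl (hKM (hginK _ (by simp [hgens])))
      · exact Or.inl (hKM (hginK _ (by simp [hgens])))
      · exact Or.inr (by rw [hss]; exact one_mem M)
    · exact Or.inl (one_mem M)
    · intro x y _ _ h1 h2
      rcases h1 with h1 | h1 <;> rcases h2 with h2 | h2
      · exact Or.inl (mul_mem h1 h2)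
      · exact Or.inr (by rw [mul_assoc]; exact mul_mem h1 h2)
      · refine Or.inr ?_
        have e : x * y * s = (x * s) * (s * y * s) := by
          calc x * y * s = x * 1 * y * s := by group
          _ = x * (s * s) * y * s := by rw [hss]
          _ = (x * s) * (s * y * s) := by group
        rw [e]; exact mul_mem h1 (hsMs y h2)
      · refine Or.inl ?_
        have e : x * y = (x * s) * (s * (y * s) * s) := by
          calc x * y = x * 1 * y * 1 := by group
          _ = x * (s * s) * y * (s * s) := by rw [hss]
          _ = (x * s) * (s * (y * s) * s) := by group
        rw [e]; exact mul_mem h1 (hsMs _ h2)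
    · intro x _ h1
      rcases h1 with h1 | h1
      · exact Or.inl (inv_mem h1)
      · refine Or.inr ?_
        have e : x⁻¹ * s = s * (x * s)⁻¹ * s := by group
        rw [e]; exact hsMs _ (inv_mem h1)
  -- M is transitive
  have hssapp : ∀ x : Fin 9, s (s x) = x := by
    intro x
    rw [hsdef, Equiv.swap_apply_self]
  have htransp : ∀ j : Fin 9, ∃ m ∈ M, m p = j := by
    by_cases hsp : ∃ m ∈ M, m p = s p
    · obtain ⟨m₀, hm₀, hm₀p⟩ := hsp
      intro j
      obtain ⟨g, hg, hgp⟩ := htrans p j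
      rcases hMs g hg with h | h
      · exact ⟨g, h, hgp⟩
      · refine ⟨(g * s) * m₀, mul_mem h hm₀, ?_⟩
        simp only [Equiv.Perm.mul_apply, hm₀p]
        rw [hssapp, hgp]
    · exfalso
      set O : Set (Fin 9) := {j | ∃ m ∈ M, m p = j} with hO
      have hdisj : Disjoint O ((s : Equiv.Perm (Fin 9)) '' O) := by
        rw [Set.disjoint_left]
        rintro y ⟨m₁, hm₁, hy₁⟩ ⟨y₂, ⟨m₂, hm₂, hy₂⟩, hy₂'⟩
        apply hsp
        refine ⟨(s * m₁⁻¹ * s) * m₂, mul_mem (hsMs _ (inv_mem hm₁)) hm₂, ?_⟩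
        simp only [Equiv.Perm.mul_apply, hy₂, hy₂', ← hy₁]
        rw [Equiv.Perm.inv_apply_self]
      have hcover : (Set.univ : Set (Fin 9)) ⊆ O ∪ (s : Equiv.Perm (Fin 9)) '' O := by
        intro j _
        obtain ⟨g, hg, hgp⟩ := htrans p j
        rcases hMs g hg with h | h
        · exact Or.inl ⟨g, h, hgp⟩
        · refine Or.inr ⟨(s * (g * s) * s) p, ⟨_, hsMs _ h, rfl⟩, ?_⟩
          simp only [Equiv.Perm.mul_apply]
          rw [hssapp, hssapp, hgp]
      have h1 : (Set.univ : Set (Fin 9)).ncard = O.ncard + ((s : Equiv.Perm (Fin 9)) '' O).ncard := by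
        rw [show (Set.univ : Set (Fin 9)) = O ∪ (s : Equiv.Perm (Fin 9)) '' O from
          le_antisymm hcover (Set.subset_univ _)]
        exact Set.ncard_union_eq hdisj (Set.toFinite _) (Set.toFinite _)
      have h2 : ((s : Equiv.Perm (Fin 9)) '' O).ncard = O.ncard :=
        Set.ncard_image_of_injective _ s.injective
      rw [Set.ncard_univ, Nat.card_eq_fintype_card, Fintype.card_fin, h2] at h1
      omega
  have htransM : ∀ i j : Fin 9, ∃ m ∈ M, m i = j := by
    intro i j
    obtain ⟨m₁, hm₁, h1⟩ := htransp i
    obtain ⟨m₂, hm₂, h2⟩ := htransp j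
    refine ⟨m₂ * m₁⁻¹, mul_mem hm₂ (inv_mem hm₁), ?_⟩
    simp only [Equiv.Perm.mul_apply, ← h1, Equiv.Perm.inv_apply_self]
    exact h2
  -- all K-orbits have the same size
  have heqsize : ∀ x y : Fin 9,
      ({z | ∃ k ∈ K, k x = z} : Set (Fin 9)).ncard = ({z | ∃ k ∈ K, k y = z} : Set (Fin 9)).ncard := by
    intro x y
    obtain ⟨m, hm, hmx⟩ := htransM x y
    have himg : (m : Equiv.Perm (Fin 9)) '' {z | ∃ k ∈ K, k x = z} = {z | ∃ k ∈ K, k y = z} := by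
      ext z
      constructor
      · rintro ⟨z₀, ⟨k, hk, hkx⟩, rfl⟩
        refine ⟨m * k * m⁻¹, (hMnorm m hm k).mp hk, ?_⟩
        simp only [Equiv.Perm.mul_apply, ← hmx, Equiv.Perm.inv_apply_self, hkx]
      · rintro ⟨k, hk, hky⟩
        have hk' : m⁻¹ * k * m ∈ K := by
          refine (hMnorm m hm (m⁻¹ * k * m)).mpr ?_
          have e : m * (m⁻¹ * k * m) * m⁻¹ = k := by group
          rw [e]; exact hk
        refine ⟨(m⁻¹ * k * m) x, ⟨_, hk', rfl⟩, ?_⟩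
        simp only [Equiv.Perm.mul_apply, hmx, Equiv.Perm.apply_inv_self]
        exact hky
    rw [← himg, Set.ncard_image_of_injective _ m.injective]
  -- case split on transitivity of K
  by_cases hKtr : ∀ x y : Fin 9, ∃ k ∈ K, k x = y
  · -- K is transitive: leads to s centralizing K, contradiction
    haveI : Fact (Nat.Prime 3) := ⟨by norm_num⟩
    have hKtr' : ∀ x y : Fin 9, ∃ k ∈ (K : Set (Equiv.Perm (Fin 9))), k x = y := hKtr
    -- the conjugate set s K s is transitive
    have hKstr : ∀ x y : Fin 9,
        ∃ t ∈ {t : Equiv.Perm (Fin 9) | ∃ g ∈ K, t = s * g * s}, t x = y := by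
      intro x y
      obtain ⟨g, hg, hgx⟩ := hKtr (s x) (s y)
      refine ⟨s * g * s, ⟨g, hg, rfl⟩, ?_⟩
      simp only [Equiv.Perm.mul_apply, hgx, hssapp]
    -- K is semiregular
    have hsemi : ∀ k ∈ K, ∀ x : Fin 9, k x = x → k = 1 := by
      intro k hk x hx
      refine eq_one_of_fix hKstr ?_ hx
      rintro t ⟨g, hg, rfl⟩
      exact (hKc g hg k hk).symm
    -- K has cardinality 9
    have hcardK : Nat.card K = 9 := by
      have hbij : Function.Bijective (fun k : K => (k : Equiv.Perm (Fin 9)) p) := by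
        constructor
        · intro k₁ k₂ h
          have hu : ((k₂ : Equiv.Perm (Fin 9))⁻¹ * k₁) p = p := by
            simp only [Equiv.Perm.mul_apply, h, Equiv.Perm.inv_apply_self]
          have := hsemi _ (mul_mem (inv_mem k₂.2) k₁.2) p hu
          exact Subtype.ext (inv_mul_eq_one.mp this).symm
        · intro j
          obtain ⟨k, hk, hkp⟩ := hKtr p j
          exact ⟨⟨k, hk⟩, hkp⟩
      rw [Nat.card_eq_of_bijective _ hbij]
      simp
    have habel : ∀ g ∈ K, ∀ h ∈ K, g * h = h * g := by
      intro g hg h hh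
      have := IsPGroup.commutative_of_card_eq_prime_sq (p := 3) (G := K)
        (by rw [hcardK]; norm_num) ⟨g, hg⟩ ⟨h, hh⟩
      simpa using congrArg Subtype.val this
    -- s centralizes K
    have hfix_s : ∀ g ∈ K, s * g * s = g := by
      intro g hg
      obtain ⟨x, hx1, hx2, hx3, hx4⟩ := exists_notin p q (g p) (g q)
      have hwx : ((s * g * s) * g⁻¹) x = x := by
        simp only [Equiv.Perm.mul_apply]
        have h1 : g⁻¹ x ≠ p := by
          intro h
          exact hx3 (by rw [← h, Equiv.Perm.apply_inv_self])
        have h2 : g⁻¹ x ≠ q := by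
          intro h
          exact hx4 (by rw [← h, Equiv.Perm.apply_inv_self])
        rw [hsfix _ h1 h2, Equiv.Perm.apply_inv_self, hsfix x hx1 hx2]
      have hw1 : (s * g * s) * g⁻¹ = 1 := by
        refine eq_one_of_fix hKtr' ?_ hwx
        intro k hk
        have hcg : Commute g⁻¹ k := habel g⁻¹ (inv_mem hg) k hk
        exact (hKc g hg k hk).mul_left hcg
      exact mul_inv_eq_one.mp hw1
    have hs_comm : ∀ g ∈ K, Commute s g := by
      intro g hg
      have e : s * g = g * s := by
        have := hfix_s g hg
        calc s * g = s * g * (s * s) := by rw [hss]; group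
        _ = (s * g * s) * s := by group
        _ = g * s := by rw [this]
      exact e
    obtain ⟨y, hy1, hy2, _, _⟩ := exists_notin p q p q
    have hsy : s y = y := hsfix y hy1 hy2
    have hs1 : s = 1 := eq_one_of_fix hKtr' (fun k hk => hs_comm k hk) hsy
    have : s p = q := by rw [hsdef]; exact Equiv.swap_apply_left p q
    rw [hs1] at this
    simp only [Equiv.Perm.one_apply] at this
    exact hpq this
  · -- K not transitive
    by_cases hz : ∃ z : Fin 9, ∀ k ∈ K, k z ≠ p ∧ k z ≠ q
    · -- some K-orbit avoids {p, q}; it is M-invariant, contradicting transitivity of M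
      obtain ⟨z, hzK⟩ := hz
      set O : Set (Fin 9) := {y | ∃ k ∈ K, k z = y} with hOdef
      have hOs : ∀ y ∈ O, s y = y := by
        rintro y ⟨k, hk, hky⟩
        exact hsfix y (hky ▸ (hzK k hk).1) (hky ▸ (hzK k hk).2)
      have hKO : ∀ g ∈ K, ∀ y ∈ O, g y ∈ O := by
        rintro g hg y ⟨k, hk, hky⟩
        exact ⟨g * k, mul_mem hg hk, by simp [Equiv.Perm.mul_apply, hky]⟩
      have hKO' : ∀ g ∈ K, ∀ y ∈ O, (s * g * s) y ∈ O := by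
        intro g hg y hy
        have h1 : (s * g * s) y = g y := by
          simp only [Equiv.Perm.mul_apply]
          rw [hOs y hy]
          exact hOs _ (hKO g hg y hy)
        rw [h1]; exact hKO g hg y hy
      have hMO : ∀ m ∈ M, ∀ y : Fin 9, (y ∈ O ↔ m y ∈ O) := by
        intro m hm
        refine Subgroup.closure_induction
          (p := fun m _ => ∀ y : Fin 9, (y ∈ O ↔ m y ∈ O)) ?_ ?_ ?_ ?_ hm
        · intro x hx y
          have hcase : x ∈ K ∨ ∃ g ∈ K, x = s * g * s := by
            simp only [hgens8, Set.mem_insert_iff, Set.mem_singleton_iff] at hx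
            rcases hx with rfl | rfl | rfl | rfl | rfl | rfl | rfl | rfl
            · exact Or.inl (hginK _ (by simp [hgens]))
            · exact Or.inl (hginK _ (by simp [hgens]))
            · exact Or.inl (hginK _ (by simp [hgens]))
            · exact Or.inl (hginK _ (by simp [hgens]))
            · exact Or.inr ⟨a, hginK _ (by simp [hgens]), rfl⟩
            · exact Or.inr ⟨b, hginK _ (by simp [hgens]), rfl⟩
            · exact Or.inr ⟨c, hginK _ (by simp [hgens]), rfl⟩
            · exact Or.inr ⟨d, hginK _ (by simp [hgens]), rfl⟩
          rcases hcase with hxK | ⟨g, hgK, rfl⟩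
          · constructor
            · intro hy; exact hKO x hxK y hy
            · intro hy
              have := hKO x⁻¹ (inv_mem hxK) _ hy
              rwa [Equiv.Perm.inv_apply_self] at this
          · constructor
            · intro hy; exact hKO' g hgK y hy
            · intro hy
              have h2 := hKO' g⁻¹ (inv_mem hgK) _ hy
              have e : (s * g⁻¹ * s) ((s * g * s) y) = y := by
                have e1 : (s * g⁻¹ * s) * (s * g * s) = 1 := by
                  rw [hconj2]
                  simp [hss]
                have := congrArg (fun f : Equiv.Perm (Fin 9) => f y) e1
                simpa [Equiv.Perm.mul_apply] using this
              rwa [e] at h2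
        · intro y; simp
        · intro x y _ _ hx hy z₀
          rw [hy z₀]
          have e : (x * y) z₀ = x (y z₀) := Equiv.Perm.mul_apply x y z₀
          rw [e, ← hx (y z₀)]
        · intro x _ hx y
          have h2 := hx (x⁻¹ y)
          rw [Equiv.Perm.apply_inv_self] at h2
          exact h2.symm
      have hzO : z ∈ O := ⟨1, one_mem K, rfl⟩
      obtain ⟨m, hm, hmz⟩ := htransM z p
      have hpO : p ∈ O := by
        have := (hMO m hm z).mp hzO
        rwa [hmz] at this
      obtain ⟨k, hk, hkz⟩ := hpO
      exact (hzK k hk).1 hkz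
    · -- every K-orbit meets {p, q}
      push_neg at hz
      have hcover : ∀ j : Fin 9, (∃ k ∈ K, k p = j) ∨ (∃ k ∈ K, k q = j) := by
        intro j
        obtain ⟨k, hk, hkj⟩ := hz j
        by_cases h : k j = p
        · refine Or.inl ⟨k⁻¹, inv_mem hk, ?_⟩
          rw [← h, Equiv.Perm.inv_apply_self]
        · refine Or.inr ⟨k⁻¹, inv_mem hk, ?_⟩
          rw [← hkj h, Equiv.Perm.inv_apply_self]
      by_cases hpq_orb : ∃ k ∈ K, k p = q
      · -- orbit of p contains q, hence everything: K transitive, contradiction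
        obtain ⟨k₀, hk₀, hk₀p⟩ := hpq_orb
        have hp_all : ∀ j : Fin 9, ∃ k ∈ K, k p = j := by
          intro j
          rcases hcover j with h | ⟨k, hk, hkq⟩
          · exact h
          · exact ⟨k * k₀, mul_mem hk hk₀, by simp [Equiv.Perm.mul_apply, hk₀p, hkq]⟩
        refine hKtr ?_
        intro x y
        obtain ⟨k₁, hk₁, h1⟩ := hp_all x
        obtain ⟨k₂, hk₂, h2⟩ := hp_all y
        refine ⟨k₂ * k₁⁻¹, mul_mem hk₂ (inv_mem hk₁), ?_⟩
        simp only [Equiv.Perm.mul_apply, ← h1, Equiv.Perm.inv_apply_self]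
        exact h2
      · by_cases hqp_orb : ∃ k ∈ K, k q = p
        · obtain ⟨k₀, hk₀, hk₀q⟩ := hqp_orb
          have hq_all : ∀ j : Fin 9, ∃ k ∈ K, k q = j := by
            intro j
            rcases hcover j with ⟨k, hk, hkp⟩ | h
            · exact ⟨k * k₀, mul_mem hk hk₀, by simp [Equiv.Perm.mul_apply, hk₀q, hkp]⟩
            · exact h
          refine hKtr ?_
          intro x y
          obtain ⟨k₁, hk₁, h1⟩ := hq_all x
          obtain ⟨k₂, hk₂, h2⟩ := hq_all y
          refine ⟨k₂ * k₁⁻¹, mul_mem hk₂ (inv_mem hk₁), ?_⟩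
          simp only [Equiv.Perm.mul_apply, ← h1, Equiv.Perm.inv_apply_self]
          exact h2
        · -- two disjoint orbits of equal size covering 9 points: parity contradiction
          set Op : Set (Fin 9) := {y | ∃ k ∈ K, k p = y} with hOp
          set Oq : Set (Fin 9) := {y | ∃ k ∈ K, k q = y} with hOq
          have hdisj : Disjoint Op Oq := by
            rw [Set.disjoint_left]
            rintro y ⟨k₁, hk₁, h1⟩ ⟨k₂, hk₂, h2⟩
            apply hqp_orb
            refine ⟨k₁⁻¹ * k₂, mul_mem (inv_mem hk₁) hk₂, ?_⟩
            simp only [Equiv.Perm.mul_apply, h2, ← h1, Equiv.Perm.inv_apply_self]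
          have hcov : (Set.univ : Set (Fin 9)) = Op ∪ Oq := by
            refine le_antisymm (fun j _ => ?_) (Set.subset_univ _)
            rcases hcover j with h | h
            · exact Or.inl h
            · exact Or.inr h
          have h1 : (Set.univ : Set (Fin 9)).ncard = Op.ncard + Oq.ncard := by
            rw [hcov]
            exact Set.ncard_union_eq hdisj (Set.toFinite _) (Set.toFinite _)
          have h2 : Op.ncard = Oq.ncard := heqsize p q
          rw [Set.ncard_univ, Nat.card_eq_fintype_card, Fintype.card_fin, h2] at h1
          omega

end BraidAux
end BraidAuxSec

/-- There are no generic monodromy representations of B in S₉. -/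
theorem stmt13 : ¬ ∃ φ : B →* Equiv.Perm (Fin 9), IsGeneric 9 φ := by
  rintro ⟨φ, hswap, htr⟩
  classical
  let ψ : FreeGroup Gen →* Equiv.Perm (Fin 9) := φ.comp (PresentedGroup.mk rels)
  have hker : ∀ r ∈ rels, ψ r = 1 := by
    intro r hr
    have h1 : (PresentedGroup.mk rels) r = 1 :=
      (QuotientGroup.eq_one_iff r).mpr (Subgroup.subset_normalClosure hr)
    show φ ((PresentedGroup.mk rels) r) = 1
    rw [h1, map_one]
  have hswap' : (ψ Sg).IsSwap := hswap
  have hsinv : (ψ Sg)⁻¹ = ψ Sg := by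
    obtain ⟨u, v, _, hsw⟩ := hswap'
    rw [hsw]; exact Equiv.swap_inv u v
  have hss : ψ Sg * ψ Sg = 1 := by
    obtain ⟨u, v, _, hsw⟩ := hswap'
    rw [hsw]; exact Equiv.swap_mul_self u v
  -- memberships of the relators
  have m1 : (Sg⁻¹ * A1 * Sg⁻¹ * A1 * (A1 * Sg⁻¹ * A1 * Sg⁻¹)⁻¹) ∈ rels :=
    Set.mem_insert _ _
  have m2 : (Sg⁻¹ * A2 * Sg⁻¹ * A2 * (A2 * Sg⁻¹ * A2 * Sg⁻¹)⁻¹) ∈ rels :=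
    Set.mem_insert_of_mem _ (Set.mem_insert _ _)
  have m3 : (Sg⁻¹ * B1 * Sg⁻¹ * B1 * (B1 * Sg⁻¹ * B1 * Sg⁻¹)⁻¹) ∈ rels :=
    Set.mem_insert_of_mem _ (Set.mem_insert_of_mem _ (Set.mem_insert _ _))
  have m4 : (Sg⁻¹ * B2 * Sg⁻¹ * B2 * (B2 * Sg⁻¹ * B2 * Sg⁻¹)⁻¹) ∈ rels :=
    Set.mem_insert_of_mem _ (Set.mem_insert_of_mem _ (Set.mem_insert_of_mem _
      (Set.mem_insert _ _)))
  have m5 : (Sg⁻¹ * A1 * Sg * A2 * (A2 * Sg⁻¹ * A1 * Sg)⁻¹) ∈ rels :=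
    Set.mem_insert_of_mem _ (Set.mem_insert_of_mem _ (Set.mem_insert_of_mem _
      (Set.mem_insert_of_mem _ (Set.mem_insert _ _))))
  have m6 : (Sg⁻¹ * B1 * Sg * B2 * (B2 * Sg⁻¹ * B1 * Sg)⁻¹) ∈ rels :=
    Set.mem_insert_of_mem _ (Set.mem_insert_of_mem _ (Set.mem_insert_of_mem _
      (Set.mem_insert_of_mem _ (Set.mem_insert_of_mem _ (Set.mem_insert _ _)))))
  have m7 : (Sg⁻¹ * A1 * Sg * B2 * (B2 * Sg⁻¹ * A1 * Sg)⁻¹) ∈ rels :=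
    Set.mem_insert_of_mem _ (Set.mem_insert_of_mem _ (Set.mem_insert_of_mem _
      (Set.mem_insert_of_mem _ (Set.mem_insert_of_mem _ (Set.mem_insert_of_mem _
        (Set.mem_insert _ _))))))
  have m8 : (Sg⁻¹ * B1 * Sg * A2 * (A2 * Sg⁻¹ * B1 * Sg)⁻¹) ∈ rels :=
    Set.mem_insert_of_mem _ (Set.mem_insert_of_mem _ (Set.mem_insert_of_mem _
      (Set.mem_insert_of_mem _ (Set.mem_insert_of_mem _ (Set.mem_insert_of_mem _
        (Set.mem_insert_of_mem _ (Set.mem_insert _ _)))))))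
  have m9 : (Sg⁻¹ * A1 * Sg⁻¹ * B1 * (B1 * Sg⁻¹ * A1 * Sg)⁻¹) ∈ rels :=
    Set.mem_insert_of_mem _ (Set.mem_insert_of_mem _ (Set.mem_insert_of_mem _
      (Set.mem_insert_of_mem _ (Set.mem_insert_of_mem _ (Set.mem_insert_of_mem _
        (Set.mem_insert_of_mem _ (Set.mem_insert_of_mem _ (Set.mem_insert _ _))))))))
  have m10 : (Sg⁻¹ * A2 * Sg⁻¹ * B2 * (B2 * Sg⁻¹ * A2 * Sg)⁻¹) ∈ rels :=
    Set.mem_insert_of_mem _ (Set.mem_insert_of_mem _ (Set.mem_insert_of_mem _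
      (Set.mem_insert_of_mem _ (Set.mem_insert_of_mem _ (Set.mem_insert_of_mem _
        (Set.mem_insert_of_mem _ (Set.mem_insert_of_mem _ (Set.mem_insert_of_mem _
          (Set.mem_insert _ _)))))))))
  -- the ten commutation relations
  have caa : Commute (ψ Sg * ψ A1 * ψ Sg) (ψ A1) := by
    have e := hker _ m1
    simp only [map_mul, map_inv] at e
    rw [mul_inv_eq_one, hsinv] at e
    show ψ Sg * ψ A1 * ψ Sg * ψ A1 = ψ A1 * (ψ Sg * ψ A1 * ψ Sg)
    simp only [mul_assoc] at e ⊢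
    exact e
  have ccc : Commute (ψ Sg * ψ A2 * ψ Sg) (ψ A2) := by
    have e := hker _ m2
    simp only [map_mul, map_inv] at e
    rw [mul_inv_eq_one, hsinv] at e
    show ψ Sg * ψ A2 * ψ Sg * ψ A2 = ψ A2 * (ψ Sg * ψ A2 * ψ Sg)
    simp only [mul_assoc] at e ⊢
    exact e
  have cbb : Commute (ψ Sg * ψ B1 * ψ Sg) (ψ B1) := by
    have e := hker _ m3
    simp only [map_mul, map_inv] at e
    rw [mul_inv_eq_one, hsinv] at e
    show ψ Sg * ψ B1 * ψ Sg * ψ B1 = ψ B1 * (ψ Sg * ψ B1 * ψ Sg)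
    simp only [mul_assoc] at e ⊢
    exact e
  have cdd : Commute (ψ Sg * ψ B2 * ψ Sg) (ψ B2) := by
    have e := hker _ m4
    simp only [map_mul, map_inv] at e
    rw [mul_inv_eq_one, hsinv] at e
    show ψ Sg * ψ B2 * ψ Sg * ψ B2 = ψ B2 * (ψ Sg * ψ B2 * ψ Sg)
    simp only [mul_assoc] at e ⊢
    exact e
  have cac : Commute (ψ Sg * ψ A1 * ψ Sg) (ψ A2) := by
    have e := hker _ m5
    simp only [map_mul, map_inv] at e
    rw [mul_inv_eq_one, hsinv] at e
    show ψ Sg * ψ A1 * ψ Sg * ψ A2 = ψ A2 * (ψ Sg * ψ A1 * ψ Sg)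
    simp only [mul_assoc] at e ⊢
    exact e
  have cbd : Commute (ψ Sg * ψ B1 * ψ Sg) (ψ B2) := by
    have e := hker _ m6
    simp only [map_mul, map_inv] at e
    rw [mul_inv_eq_one, hsinv] at e
    show ψ Sg * ψ B1 * ψ Sg * ψ B2 = ψ B2 * (ψ Sg * ψ B1 * ψ Sg)
    simp only [mul_assoc] at e ⊢
    exact e
  have cad : Commute (ψ Sg * ψ A1 * ψ Sg) (ψ B2) := by
    have e := hker _ m7
    simp only [map_mul, map_inv] at e
    rw [mul_inv_eq_one, hsinv] at e
    show ψ Sg * ψ A1 * ψ Sg * ψ B2 = ψ B2 * (ψ Sg * ψ A1 * ψ Sg)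
    simp only [mul_assoc] at e ⊢
    exact e
  have cbc : Commute (ψ Sg * ψ B1 * ψ Sg) (ψ A2) := by
    have e := hker _ m8
    simp only [map_mul, map_inv] at e
    rw [mul_inv_eq_one, hsinv] at e
    show ψ Sg * ψ B1 * ψ Sg * ψ A2 = ψ A2 * (ψ Sg * ψ B1 * ψ Sg)
    simp only [mul_assoc] at e ⊢
    exact e
  have cab : Commute (ψ Sg * ψ A1 * ψ Sg) (ψ B1) := by
    have e := hker _ m9
    simp only [map_mul, map_inv] at e
    rw [mul_inv_eq_one, hsinv] at e
    show ψ Sg * ψ A1 * ψ Sg * ψ B1 = ψ B1 * (ψ Sg * ψ A1 * ψ Sg)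
    simp only [mul_assoc] at e ⊢
    exact e
  have ccd : Commute (ψ Sg * ψ A2 * ψ Sg) (ψ B2) := by
    have e := hker _ m10
    simp only [map_mul, map_inv] at e
    rw [mul_inv_eq_one, hsinv] at e
    show ψ Sg * ψ A2 * ψ Sg * ψ B2 = ψ B2 * (ψ Sg * ψ A2 * ψ Sg)
    simp only [mul_assoc] at e ⊢
    exact e
  -- derived ones, by conjugating with s
  have cca : Commute (ψ Sg * ψ A2 * ψ Sg) (ψ A1) := BraidAux.comm_conj hss cac
  have cdb : Commute (ψ Sg * ψ B2 * ψ Sg) (ψ B1) := BraidAux.comm_conj hss cbd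
  have cda : Commute (ψ Sg * ψ B2 * ψ Sg) (ψ A1) := BraidAux.comm_conj hss cad
  have ccb : Commute (ψ Sg * ψ A2 * ψ Sg) (ψ B1) := BraidAux.comm_conj hss cbc
  have cba : Commute (ψ Sg * ψ B1 * ψ Sg) (ψ A1) := BraidAux.comm_conj hss cab
  have cdc : Commute (ψ Sg * ψ B2 * ψ Sg) (ψ A2) := BraidAux.comm_conj hss ccd
  -- transitivity transferred to the closure of the images of the generators
  have htrans' : ∀ i j : Fin 9,
      ∃ g ∈ Subgroup.closure ({ψ A1, ψ B1, ψ A2, ψ B2, ψ Sg} :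
        Set (Equiv.Perm (Fin 9))), g i = j := by
    have hmem : ∀ w : FreeGroup Gen, ψ w ∈ Subgroup.closure
        ({ψ A1, ψ B1, ψ A2, ψ B2, ψ Sg} : Set (Equiv.Perm (Fin 9))) := by
      intro w
      induction w using FreeGroup.induction_on with
      | C1 => simpa using one_mem _
      | of x =>
        cases x
        · exact Subgroup.subset_closure (Set.mem_insert _ _)
        · exact Subgroup.subset_closure (Set.mem_insert_of_mem _
            (Set.mem_insert_of_mem _ (Set.mem_insert _ _)))
        · exact Subgroup.subset_closure (Set.mem_insert_of_mem _ (Set.mem_insert _ _))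
        · exact Subgroup.subset_closure (Set.mem_insert_of_mem _ (Set.mem_insert_of_mem _
            (Set.mem_insert_of_mem _ (Set.mem_insert _ _))))
        · exact Subgroup.subset_closure (Set.mem_insert_of_mem _ (Set.mem_insert_of_mem _
            (Set.mem_insert_of_mem _ (Set.mem_insert_of_mem _ rfl))))
      | inv_of x ih =>
        rw [map_inv]
        exact inv_mem ih
      | mul x y ihx ihy =>
        rw [map_mul]
        exact mul_mem ihx ihy
    intro i j
    obtain ⟨g, hg⟩ := htr i j
    obtain ⟨w, rfl⟩ := PresentedGroup.mk_surjective rels g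
    exact ⟨ψ w, hmem w, hg⟩
  -- assemble the hypotheses of the key lemma
  refine BraidAux.key (ψ Sg) (ψ A1) (ψ B1) (ψ A2) (ψ B2) hswap' ?_ htrans'
  intro x hx y hy
  simp only [Set.mem_insert_iff, Set.mem_singleton_iff] at hx hy
  rcases hx with rfl | rfl | rfl | rfl <;> rcases hy with rfl | rfl | rfl | rfl
  exacts [caa, cab, cac, cad, cba, cbb, cbc, cbd, cca, ccb, ccc, ccd, cda, cdb, cdc, cdd]
end

section
/- There are exactly 80 group homomorphisms φ: B → S₃ such that φ(σ) is the fixed transposition (1 2), and the image of φ is a transitive subgroup of S₃. -/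
open Braid


namespace BraidAux

open Braid Equiv

abbrev P3_s16 := Equiv.Perm (Fin 3)

def s0 : P3_s16 := Equiv.swap 0 1

def Cond (v : P3_s16 × P3_s16 × P3_s16 × P3_s16) : Prop :=
  (s0⁻¹ * v.1 * s0⁻¹ * v.1 = v.1 * s0⁻¹ * v.1 * s0⁻¹) ∧
  (s0⁻¹ * v.2.1 * s0⁻¹ * v.2.1 = v.2.1 * s0⁻¹ * v.2.1 * s0⁻¹) ∧
  (s0⁻¹ * v.2.2.1 * s0⁻¹ * v.2.2.1 = v.2.2.1 * s0⁻¹ * v.2.2.1 * s0⁻¹) ∧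
  (s0⁻¹ * v.2.2.2 * s0⁻¹ * v.2.2.2 = v.2.2.2 * s0⁻¹ * v.2.2.2 * s0⁻¹) ∧
  (s0⁻¹ * v.1 * s0 * v.2.1 = v.2.1 * s0⁻¹ * v.1 * s0) ∧
  (s0⁻¹ * v.2.2.1 * s0 * v.2.2.2 = v.2.2.2 * s0⁻¹ * v.2.2.1 * s0) ∧
  (s0⁻¹ * v.1 * s0 * v.2.2.2 = v.2.2.2 * s0⁻¹ * v.1 * s0) ∧
  (s0⁻¹ * v.2.2.1 * s0 * v.2.1 = v.2.1 * s0⁻¹ * v.2.2.1 * s0) ∧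
  (s0⁻¹ * v.1 * s0⁻¹ * v.2.2.1 = v.2.2.1 * s0⁻¹ * v.1 * s0) ∧
  (s0⁻¹ * v.2.1 * s0⁻¹ * v.2.2.2 = v.2.2.2 * s0⁻¹ * v.2.1 * s0) ∧
  ((v.1 * v.2.2.1⁻¹ * v.1⁻¹ * v.2.2.1) * (v.2.1 * v.2.2.2⁻¹ * v.2.1⁻¹ * v.2.2.2) = s0 * s0) ∧
  (v.1 2 ≠ 2 ∨ v.2.1 2 ≠ 2 ∨ v.2.2.1 2 ≠ 2 ∨ v.2.2.2 2 ≠ 2)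

instance : DecidablePred Cond := fun v => by unfold Cond; infer_instance

def fgen (v : P3_s16 × P3_s16 × P3_s16 × P3_s16) : Gen → P3_s16
  | Gen.a1 => v.1
  | Gen.a2 => v.2.1
  | Gen.b1 => v.2.2.1
  | Gen.b2 => v.2.2.2
  | Gen.s => s0

theorem lift_rels (v : P3_s16 × P3_s16 × P3_s16 × P3_s16) (h : Cond v) :
    ∀ r ∈ rels, FreeGroup.lift (fgen v) r = 1 := by
  obtain ⟨h1, h2, h3, h4, h5, h6, h7, h8, h9, h10, h11, -⟩ := h
  intro r hr
  simp only [rels, Set.mem_insert_iff, Set.mem_singleton_iff] at hr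
  rcases hr with rfl|rfl|rfl|rfl|rfl|rfl|rfl|rfl|rfl|rfl|rfl <;>
    simp only [map_mul, map_inv, FreeGroup.lift_apply_of, fgen, mul_inv_eq_one] <;>
    assumption

/-- The homomorphism attached to a tuple satisfying the conditions. -/
def toHom (v : P3_s16 × P3_s16 × P3_s16 × P3_s16) (h : Cond v) : B →* P3_s16 :=
  PresentedGroup.toGroup (lift_rels v h)

theorem toHom_of (v : P3_s16 × P3_s16 × P3_s16 × P3_s16) (h : Cond v) (x : Gen) :
    toHom v h (PresentedGroup.of x) = fgen v x :=
  PresentedGroup.toGroup.of (lift_rels v h)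

theorem transitive_of (φ : B →* P3_s16) (hσ : φ σB = s0) (x : Gen)
    (hx : φ (PresentedGroup.of x) 2 ≠ 2) : ∀ i j : Fin 3, ∃ g : B, φ g i = j := by
  set t : P3_s16 := φ (PresentedGroup.of x) with ht
  have h3 : ∀ a : Fin 3, a = 0 ∨ a = 1 ∨ a = 2 := by decide
  have hs : ∀ g₁ g₂ : B, φ (g₁ * g₂) = φ g₁ * φ g₂ := fun g₁ g₂ => map_mul φ g₁ g₂
  rcases h3 (t 2) with h0 | h0 | h0
  · intro i j
    rcases h3 i with rfl | rfl | rfl <;> rcases h3 j with rfl | rfl | rfl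
    · exact ⟨1, by simp⟩
    · exact ⟨σB, by simp [hσ, s0]⟩
    · refine ⟨(PresentedGroup.of x)⁻¹, ?_⟩
      rw [map_inv, ← ht]
      simp [Equiv.Perm.inv_eq_iff_eq, Equiv.symm_apply_eq, h0]
    · exact ⟨σB, by simp [hσ, s0]⟩
    · exact ⟨1, by simp⟩
    · refine ⟨(PresentedGroup.of x)⁻¹ * σB, ?_⟩
      rw [hs, map_inv, ← ht, hσ]
      simp [s0, Equiv.Perm.inv_eq_iff_eq, Equiv.symm_apply_eq, h0]
    · exact ⟨PresentedGroup.of x, by rw [← ht]; exact h0⟩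
    · refine ⟨σB * PresentedGroup.of x, ?_⟩
      rw [hs, hσ, ← ht]
      simp [s0, h0]
    · exact ⟨1, by simp⟩
  · intro i j
    rcases h3 i with rfl | rfl | rfl <;> rcases h3 j with rfl | rfl | rfl
    · exact ⟨1, by simp⟩
    · exact ⟨σB, by simp [hσ, s0]⟩
    · refine ⟨(PresentedGroup.of x)⁻¹ * σB, ?_⟩
      rw [hs, map_inv, ← ht, hσ]
      simp [s0, Equiv.Perm.inv_eq_iff_eq, Equiv.symm_apply_eq, h0]
    · exact ⟨σB, by simp [hσ, s0]⟩
    · exact ⟨1, by simp⟩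
    · refine ⟨(PresentedGroup.of x)⁻¹, ?_⟩
      rw [map_inv, ← ht]
      simp [Equiv.Perm.inv_eq_iff_eq, Equiv.symm_apply_eq, h0]
    · refine ⟨σB * PresentedGroup.of x, ?_⟩
      rw [hs, hσ, ← ht]
      simp [s0, h0]
    · exact ⟨PresentedGroup.of x, by rw [← ht]; exact h0⟩
    · exact ⟨1, by simp⟩
  · exact absurd h0 hx

theorem comp_mk (φ : B →* P3_s16) :
    φ.comp (PresentedGroup.mk rels) = FreeGroup.lift (fun x => φ (PresentedGroup.of x)) := by
  apply FreeGroup.ext_hom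
  intro a
  simp [PresentedGroup.of, FreeGroup.lift_apply_of]

theorem mk_rel_eq_one {r : FreeGroup Gen} (hr : r ∈ rels) :
    (PresentedGroup.mk rels r : B) = 1 := by
  have : r ∈ Subgroup.normalClosure rels := Subgroup.subset_normalClosure hr
  exact (QuotientGroup.eq_one_iff r).mpr this

theorem cond_of_hom (φ : B →* P3_s16) (hσ : φ σB = s0)
    (htr : ∀ i j : Fin 3, ∃ g : B, φ g i = j) :
    Cond (φ (PresentedGroup.of Gen.a1), φ (PresentedGroup.of Gen.a2),
      φ (PresentedGroup.of Gen.b1), φ (PresentedGroup.of Gen.b2)) := by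
  have key : ∀ r ∈ rels, FreeGroup.lift (fun x => φ (PresentedGroup.of x)) r = 1 := by
    intro r hr
    rw [← comp_mk]
    simp only [MonoidHom.comp_apply, mk_rel_eq_one hr, map_one]
  have hlift : ∀ x : Gen, FreeGroup.lift (fun x => φ (PresentedGroup.of x)) (FreeGroup.of x)
      = φ (PresentedGroup.of x) := fun x => FreeGroup.lift_apply_of
  have hS : φ (PresentedGroup.of Gen.s) = s0 := hσ
  have e1 := key (Sg⁻¹ * A1 * Sg⁻¹ * A1 * (A1 * Sg⁻¹ * A1 * Sg⁻¹)⁻¹) (id (by simp only [rels, Set.mem_insert_iff, Set.mem_singleton_iff]; exact Or.inl trivial))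
  simp only [map_mul, map_inv, hlift, hS] at e1
  rw [mul_inv_eq_one] at e1
  have e2 := key (Sg⁻¹ * A2 * Sg⁻¹ * A2 * (A2 * Sg⁻¹ * A2 * Sg⁻¹)⁻¹) (id (by simp only [rels, Set.mem_insert_iff, Set.mem_singleton_iff]; exact Or.inr (Or.inl trivial)))
  simp only [map_mul, map_inv, hlift, hS] at e2
  rw [mul_inv_eq_one] at e2
  have e3 := key (Sg⁻¹ * B1 * Sg⁻¹ * B1 * (B1 * Sg⁻¹ * B1 * Sg⁻¹)⁻¹) (id (by simp only [rels, Set.mem_insert_iff, Set.mem_singleton_iff]; exact Or.inr (Or.inr (Or.inl trivial))))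
  simp only [map_mul, map_inv, hlift, hS] at e3
  rw [mul_inv_eq_one] at e3
  have e4 := key (Sg⁻¹ * B2 * Sg⁻¹ * B2 * (B2 * Sg⁻¹ * B2 * Sg⁻¹)⁻¹) (id (by simp only [rels, Set.mem_insert_iff, Set.mem_singleton_iff]; exact Or.inr (Or.inr (Or.inr (Or.inl trivial)))))
  simp only [map_mul, map_inv, hlift, hS] at e4
  rw [mul_inv_eq_one] at e4
  have e5 := key (Sg⁻¹ * A1 * Sg * A2 * (A2 * Sg⁻¹ * A1 * Sg)⁻¹) (id (by simp only [rels, Set.mem_insert_iff, Set.mem_singleton_iff]; exact Or.inr (Or.inr (Or.inr (Or.inr (Or.inl trivial))))))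
  simp only [map_mul, map_inv, hlift, hS] at e5
  rw [mul_inv_eq_one] at e5
  have e6 := key (Sg⁻¹ * B1 * Sg * B2 * (B2 * Sg⁻¹ * B1 * Sg)⁻¹) (id (by simp only [rels, Set.mem_insert_iff, Set.mem_singleton_iff]; exact Or.inr (Or.inr (Or.inr (Or.inr (Or.inr (Or.inl trivial)))))))
  simp only [map_mul, map_inv, hlift, hS] at e6
  rw [mul_inv_eq_one] at e6
  have e7 := key (Sg⁻¹ * A1 * Sg * B2 * (B2 * Sg⁻¹ * A1 * Sg)⁻¹) (id (by simp only [rels, Set.mem_insert_iff, Set.mem_singleton_iff]; exact Or.inr (Or.inr (Or.inr (Or.inr (Or.inr (Or.inr (Or.inl trivial))))))))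
  simp only [map_mul, map_inv, hlift, hS] at e7
  rw [mul_inv_eq_one] at e7
  have e8 := key (Sg⁻¹ * B1 * Sg * A2 * (A2 * Sg⁻¹ * B1 * Sg)⁻¹) (id (by simp only [rels, Set.mem_insert_iff, Set.mem_singleton_iff]; exact Or.inr (Or.inr (Or.inr (Or.inr (Or.inr (Or.inr (Or.inr (Or.inl trivial)))))))))
  simp only [map_mul, map_inv, hlift, hS] at e8
  rw [mul_inv_eq_one] at e8
  have e9 := key (Sg⁻¹ * A1 * Sg⁻¹ * B1 * (B1 * Sg⁻¹ * A1 * Sg)⁻¹) (id (by simp only [rels, Set.mem_insert_iff, Set.mem_singleton_iff]; exact Or.inr (Or.inr (Or.inr (Or.inr (Or.inr (Or.inr (Or.inr (Or.inr (Or.inl trivial))))))))))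
  simp only [map_mul, map_inv, hlift, hS] at e9
  rw [mul_inv_eq_one] at e9
  have e10 := key (Sg⁻¹ * A2 * Sg⁻¹ * B2 * (B2 * Sg⁻¹ * A2 * Sg)⁻¹) (id (by simp only [rels, Set.mem_insert_iff, Set.mem_singleton_iff]; exact Or.inr (Or.inr (Or.inr (Or.inr (Or.inr (Or.inr (Or.inr (Or.inr (Or.inr (Or.inl trivial)))))))))))
  simp only [map_mul, map_inv, hlift, hS] at e10
  rw [mul_inv_eq_one] at e10
  have e11 := key ((A1 * B1⁻¹ * A1⁻¹ * B1) * (A2 * B2⁻¹ * A2⁻¹ * B2) * (Sg * Sg)⁻¹) (id (by simp only [rels, Set.mem_insert_iff, Set.mem_singleton_iff]; exact Or.inr (Or.inr (Or.inr (Or.inr (Or.inr (Or.inr (Or.inr (Or.inr (Or.inr (Or.inr (trivial))))))))))))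
  simp only [map_mul, map_inv, hlift, hS] at e11
  rw [mul_inv_eq_one] at e11
  have trans2 : φ (PresentedGroup.of Gen.a1) 2 ≠ 2 ∨ φ (PresentedGroup.of Gen.a2) 2 ≠ 2 ∨
      φ (PresentedGroup.of Gen.b1) 2 ≠ 2 ∨ φ (PresentedGroup.of Gen.b2) 2 ≠ 2 := by
    by_contra hcon
    push_neg at hcon
    obtain ⟨f1, f2, f3, f4⟩ := hcon
    have hclos : ∀ g ∈ Subgroup.closure (Set.range (PresentedGroup.of : Gen → B)),
        φ g 2 = 2 := by
      intro g hg
      induction hg using Subgroup.closure_induction with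
      | mem y hy =>
        obtain ⟨x, rfl⟩ := hy
        cases x
        · exact f1
        · exact f2
        · exact f3
        · exact f4
        · show φ σB 2 = 2
          rw [hσ]; decide
      | one => simp
      | mul y z _ _ hy hz => rw [map_mul]; simp only [Equiv.Perm.mul_apply, hz, hy]
      | inv y _ hy =>
        rw [map_inv]
        have h2 : (φ y)⁻¹ (φ y 2) = 2 := Equiv.symm_apply_apply _ _
        rwa [hy] at h2
    obtain ⟨g, hg⟩ := htr 2 0
    have h0 := hclos g (by rw [PresentedGroup.closure_range_of rels]; trivial)
    rw [hg] at h0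
    exact absurd h0 (by decide)
  exact ⟨e1, e2, e3, e4, e5, e6, e7, e8, e9, e10, e11, trans2⟩

set_option maxRecDepth 100000 in
set_option maxHeartbeats 4000000 in
theorem card_cond : Nat.card {v : P3_s16 × P3_s16 × P3_s16 × P3_s16 // Cond v} = 80 := by
  rw [Nat.card_eq_fintype_card, Fintype.card_subtype]
  decide

end BraidAux

/-- There are exactly 80 homomorphisms φ : B → S₃ with φ(σ) = (1 2) and
transitive image. -/
theorem stmt16 :
    Set.ncard {φ : B →* Equiv.Perm (Fin 3) |
      φ σB = Equiv.swap 0 1 ∧ ∀ i j : Fin 3, ∃ g : B, φ g i = j} = 80 := by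
  classical
  have e : {φ : B →* Equiv.Perm (Fin 3) |
      φ σB = Equiv.swap 0 1 ∧ ∀ i j : Fin 3, ∃ g : B, φ g i = j} ≃
      {v : BraidAux.P3_s16 × BraidAux.P3_s16 × BraidAux.P3_s16 × BraidAux.P3_s16 // BraidAux.Cond v} := by
    refine
      { toFun := fun φ => ⟨(φ.1 (PresentedGroup.of Gen.a1), φ.1 (PresentedGroup.of Gen.a2),
          φ.1 (PresentedGroup.of Gen.b1), φ.1 (PresentedGroup.of Gen.b2)),
          BraidAux.cond_of_hom φ.1 φ.2.1 φ.2.2⟩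
        invFun := fun v => ⟨BraidAux.toHom v.1 v.2, ?_, ?_⟩
        left_inv := ?_
        right_inv := ?_ }
    · show BraidAux.toHom v.1 v.2 (PresentedGroup.of Gen.s) = Equiv.swap 0 1
      exact PresentedGroup.toGroup.of _
    · obtain ⟨-, -, -, -, -, -, -, -, -, -, -, htr⟩ := v.2
      have hσ : BraidAux.toHom v.1 v.2 σB = BraidAux.s0 := PresentedGroup.toGroup.of _
      rcases htr with h | h | h | h
      · refine BraidAux.transitive_of _ hσ Gen.a1 ?_
        rw [show BraidAux.toHom v.1 v.2 (PresentedGroup.of Gen.a1) = v.1.1 from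
          PresentedGroup.toGroup.of _]; exact h
      · refine BraidAux.transitive_of _ hσ Gen.a2 ?_
        rw [show BraidAux.toHom v.1 v.2 (PresentedGroup.of Gen.a2) = v.1.2.1 from
          PresentedGroup.toGroup.of _]; exact h
      · refine BraidAux.transitive_of _ hσ Gen.b1 ?_
        rw [show BraidAux.toHom v.1 v.2 (PresentedGroup.of Gen.b1) = v.1.2.2.1 from
          PresentedGroup.toGroup.of _]; exact h
      · refine BraidAux.transitive_of _ hσ Gen.b2 ?_
        rw [show BraidAux.toHom v.1 v.2 (PresentedGroup.of Gen.b2) = v.1.2.2.2 from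
          PresentedGroup.toGroup.of _]; exact h
    · rintro ⟨φ, hφ1, hφ2⟩
      ext1
      dsimp only
      refine PresentedGroup.ext fun x => ?_
      cases x
      · exact BraidAux.toHom_of _ _ Gen.a1
      · exact BraidAux.toHom_of _ _ Gen.a2
      · exact BraidAux.toHom_of _ _ Gen.b1
      · exact BraidAux.toHom_of _ _ Gen.b2
      · exact (BraidAux.toHom_of _ _ Gen.s).trans hφ1.symm
    · rintro ⟨v, hv⟩
      ext1
      dsimp only
      refine Prod.ext (BraidAux.toHom_of _ _ Gen.a1) (Prod.ext (BraidAux.toHom_of _ _ Gen.a2)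
        (Prod.ext (BraidAux.toHom_of _ _ Gen.b1) (BraidAux.toHom_of _ _ Gen.b2)))
  rw [← Nat.card_coe_set_eq, Nat.card_congr e, BraidAux.card_cond]
end
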